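/- arXiv:1603.09173 — 5 statements merged into one kernel-verified Lean document; each statement's English description precedes it below -/
import Mathlib

section
/- Let A be a finite nonempty set, X the simplex in ℝ^A, v : X → ℝ^A continuous, and let h be twice continuously differentiable on an open set containing X with Hessian H(y) positive definite for every y ∈ X; for each y ∈ X let V(y) be the H(y)-projection of H(y)⁻¹ v(y) onto TC_X(y). Suppose x* ∈ X is an evolutionarily stable state: there is an open neighborhood W of x* such that v(x)·(x − x*) < 0 for all x ∈ W ∩ X with x ≠ x*. Then x* is asymptotically stable for the dynamics: (a) for every neighborhood U of x* in X there is a neighborhood U' of x* in X such that every solution x(t) = x(0) + ∫₀ᵗ V(x(s)) ds with x(0) ∈ U' satisfies x(t) ∈ U for all t ≥ 0; and (b) there is a neighborhood U₀ of x* in X such that every such solution with x(0) ∈ U₀ converges to x*. -/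
open Matrix Filter MeasureTheory intervalIntegral

noncomputable section

/-- The tangent cone `TC_X(x)` of the simplex at `x`. -/
def tcone {A : Type*} [Fintype A] (x : A → ℝ) : Set (A → ℝ) :=
  {z | (∑ α, z α) = 0 ∧ ∀ α, x α = 0 → 0 ≤ z α}

/-- The quadratic form `wᵀ G w = ‖w‖_G²` associated to a matrix `G`. -/
def qform {A : Type*} [Fintype A] (G : Matrix A A ℝ) (w : A → ℝ) : ℝ :=
  w ⬝ᵥ G.mulVec w

/-- `V` is the `G`-projection of `w` onto `C`. -/
def IsGProj {A : Type*} [Fintype A] (G : Matrix A A ℝ) (C : Set (A → ℝ))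
    (w V : A → ℝ) : Prop :=
  V ∈ C ∧ ∀ z ∈ C, qform G (w - V) ≤ qform G (w - z)

/-- The Hessian matrix of `h` at `y`. -/
def hessMat {A : Type*} [Fintype A] [DecidableEq A] (h : (A → ℝ) → ℝ) (y : A → ℝ) :
    Matrix A A ℝ :=
  Matrix.of fun α β => fderiv ℝ (fderiv ℝ h) y (Pi.single α 1) (Pi.single β 1)

/-- A (forward) Carathéodory solution of `ẋ = V(x)` on the simplex. -/
def IsSol {A : Type*} [Fintype A] (V : (A → ℝ) → (A → ℝ)) (x : ℝ → (A → ℝ)) : Prop :=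
  (∀ t : ℝ, 0 ≤ t → x t ∈ stdSimplex ℝ A) ∧ ContinuousOn x (Set.Ici 0) ∧
  (∀ t : ℝ, 0 ≤ t → IntervalIntegrable (fun s => V (x s)) MeasureTheory.volume 0 t) ∧
  ∀ t : ℝ, 0 ≤ t → x t = x 0 + ∫ s in (0:ℝ)..t, V (x s)

set_option linter.unusedSectionVars false
set_option maxHeartbeats 1000000

lemma core {E : Type*} [NormedAddCommGroup E] [NormedSpace ℝ E] [CompleteSpace E]
    (Φ : E → ℝ) (Φ' : E → (E →L[ℝ] ℝ)) (K : Set E) (hK : IsCompact K) (hKc : Convex ℝ K)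
    (hΦ : ∀ y ∈ K, HasFDerivAt Φ (Φ' y) y) (hΦ'c : ContinuousOn Φ' K)
    (x : ℝ → E) (f : ℝ → E) (a b c : ℝ) (hab : a ≤ b)
    (hxc : ContinuousOn x (Set.Icc a b))
    (hxK : ∀ t ∈ Set.Icc a b, x t ∈ K)
    (hf : IntervalIntegrable f MeasureTheory.volume a b)
    (hint : ∀ s t : ℝ, a ≤ s → s ≤ t → t ≤ b → x t - x s = ∫ u in s..t, f u)
    (hg : ∀ s ∈ Set.Icc a b, Φ' (x s) (f s) ≤ c) :
    Φ (x b) - Φ (x a) ≤ c * (b - a) := by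
  have hC0 : (0:ℝ) ≤ ∫ s in a..b, ‖f s‖ :=
    intervalIntegral.integral_nonneg hab (fun u _ => norm_nonneg _)
  set C := ∫ s in a..b, ‖f s‖ with hCdef
  refine le_of_forall_pos_le_add ?_
  intro ε' hε'
  set ε := ε' / (C + 1) with hεdef
  have hε : 0 < ε := by positivity
  -- uniform continuity of Φ' on K
  have hucΦ' := hK.uniformContinuousOn_of_continuous hΦ'c
  rw [Metric.uniformContinuousOn_iff] at hucΦ'
  obtain ⟨δ₁, hδ₁, hΦ'uc⟩ := hucΦ' ε hε
  -- uniform continuity of x on [a,b]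
  have hucx := isCompact_Icc.uniformContinuousOn_of_continuous hxc
  rw [Metric.uniformContinuousOn_iff] at hucx
  obtain ⟨δ, hδ, hxuc⟩ := hucx (δ₁/2) (by positivity)
  -- per-piece estimate
  have piece : ∀ s₁ s₂ : ℝ, a ≤ s₁ → s₁ ≤ s₂ → s₂ ≤ b → s₂ - s₁ < δ →
      Φ (x s₂) - Φ (x s₁) ≤ c * (s₂ - s₁) + ε * ∫ s in s₁..s₂, ‖f s‖ := by
    intro s₁ s₂ h1 h12 h2 hlt
    have hs₁ : s₁ ∈ Set.Icc a b := ⟨h1, le_trans h12 h2⟩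
    have hs₂ : s₂ ∈ Set.Icc a b := ⟨le_trans h1 h12, h2⟩
    set Δ := x s₂ - x s₁ with hΔ
    have hΔint : x s₂ - x s₁ = ∫ u in s₁..s₂, f u := hint s₁ s₂ h1 h12 h2
    have hΔsmall : ‖Δ‖ < δ₁/2 := by
      have := hxuc s₂ hs₂ s₁ hs₁
        (by rw [Real.dist_eq, abs_of_nonneg (by linarith)]; linarith)
      simpa [hΔ, dist_eq_norm] using this
    set p : ℝ → E := fun τ => x s₁ + τ • Δ with hp
    have hpK : ∀ τ ∈ Set.Icc (0:ℝ) 1, p τ ∈ K := fun τ hτ =>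
      hKc.add_smul_sub_mem (hxK _ hs₁) (hxK _ hs₂) hτ
    have hψ : ∀ τ ∈ Set.Icc (0:ℝ) 1, HasDerivAt (fun τ => Φ (p τ)) (Φ' (p τ) Δ) τ := by
      intro τ hτ
      have h1' : HasDerivAt p Δ τ := by
        simpa [hp] using ((hasDerivAt_id τ).smul_const Δ).const_add (x s₁)
      exact (hΦ _ (hpK τ hτ)).comp_hasDerivAt τ h1'
    have hψc : ContinuousOn (fun τ => Φ (p τ)) (Set.Icc 0 1) := fun τ hτ =>
      ((hψ τ hτ).continuousAt).continuousWithinAt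
    obtain ⟨τ₀, hτ₀, hslope⟩ := exists_hasDerivAt_eq_slope (fun τ => Φ (p τ))
      (fun τ => Φ' (p τ) Δ) (by norm_num) hψc
      (fun τ hτ => hψ τ (Set.mem_Icc_of_Ioo hτ))
    have hp0 : p 0 = x s₁ := by simp [hp]
    have hp1 : p 1 = x s₂ := by simp [hp, hΔ]
    have hdiff : Φ (x s₂) - Φ (x s₁) = Φ' (p τ₀) Δ := by
      rw [hslope, hp0, hp1]; ring
    set ξ := p τ₀ with hξ
    have hξK : ξ ∈ K := hpK τ₀ (Set.mem_Icc_of_Ioo hτ₀)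
    have hξclose : ∀ s ∈ Set.Icc s₁ s₂, dist ξ (x s) < δ₁ := by
      intro s hs
      have hsI : s ∈ Set.Icc a b := ⟨le_trans h1 hs.1, le_trans hs.2 h2⟩
      have h2' : dist (x s₁) (x s) < δ₁/2 := hxuc s₁ hs₁ s hsI
        (by rw [Real.dist_eq, abs_of_nonpos (by linarith [hs.1])]; linarith [hs.2])
      have h1' : dist ξ (x s₁) < δ₁/2 := by
        rw [hξ, hp, dist_eq_norm]
        have : x s₁ + τ₀ • Δ - x s₁ = τ₀ • Δ := by abel
        rw [this, norm_smul, Real.norm_eq_abs, abs_of_pos hτ₀.1]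
        calc τ₀ * ‖Δ‖ ≤ 1 * ‖Δ‖ := by
              apply mul_le_mul_of_nonneg_right hτ₀.2.le (norm_nonneg _)
          _ = ‖Δ‖ := one_mul _
          _ < δ₁/2 := hΔsmall
      calc dist ξ (x s) ≤ dist ξ (x s₁) + dist (x s₁) (x s) := dist_triangle _ _ _
        _ < δ₁/2 + δ₁/2 := add_lt_add h1' h2'
        _ = δ₁ := by ring
    have hfint : IntervalIntegrable f MeasureTheory.volume s₁ s₂ := by
      apply hf.mono_set
      rw [Set.uIcc_of_le h12, Set.uIcc_of_le hab]
      exact Set.Icc_subset_Icc h1 h2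
    have hval : Φ' ξ Δ = ∫ s in s₁..s₂, Φ' ξ (f s) := by
      rw [hΔ, hΔint]
      exact ((Φ' ξ).intervalIntegral_comp_comm hfint).symm
    have hLint : IntervalIntegrable (fun s => Φ' ξ (f s)) MeasureTheory.volume s₁ s₂ :=
      ⟨(Φ' ξ).integrable_comp hfint.1, (Φ' ξ).integrable_comp hfint.2⟩
    have hRint : IntervalIntegrable (fun s => c + ε * ‖f s‖) MeasureTheory.volume s₁ s₂ :=
      intervalIntegrable_const.add (hfint.norm.const_mul ε)
    have hmono : (∫ s in s₁..s₂, Φ' ξ (f s)) ≤ ∫ s in s₁..s₂, (c + ε * ‖f s‖) := by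
      apply intervalIntegral.integral_mono_on h12 hLint hRint
      intro s hs
      have hsI : s ∈ Set.Icc a b := ⟨le_trans h1 hs.1, le_trans hs.2 h2⟩
      have hbnd : (Φ' ξ - Φ' (x s)) (f s) ≤ ε * ‖f s‖ := by
        calc (Φ' ξ - Φ' (x s)) (f s) ≤ ‖(Φ' ξ - Φ' (x s)) (f s)‖ := by rw [Real.norm_eq_abs]; exact le_abs_self _
          _ ≤ ‖Φ' ξ - Φ' (x s)‖ * ‖f s‖ := (Φ' ξ - Φ' (x s)).le_opNorm (f s)
          _ ≤ ε * ‖f s‖ := by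
              apply mul_le_mul_of_nonneg_right _ (norm_nonneg _)
              have := hΦ'uc ξ hξK (x s) (hxK s hsI) (hξclose s hs)
              rw [dist_eq_norm] at this
              exact this.le
      have : Φ' ξ (f s) = Φ' (x s) (f s) + (Φ' ξ - Φ' (x s)) (f s) := by simp
      rw [this]
      exact add_le_add (hg s hsI) hbnd
    have hre : (∫ s in s₁..s₂, (c + ε * ‖f s‖)) =
        c * (s₂ - s₁) + ε * ∫ s in s₁..s₂, ‖f s‖ := by
      rw [intervalIntegral.integral_add intervalIntegrable_const (hfint.norm.const_mul ε),
        intervalIntegral.integral_const, intervalIntegral.integral_const_mul, smul_eq_mul]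
      ring
    rw [hdiff]
    calc Φ' ξ Δ = ∫ s in s₁..s₂, Φ' ξ (f s) := hval
      _ ≤ ∫ s in s₁..s₂, (c + ε * ‖f s‖) := hmono
      _ = c * (s₂ - s₁) + ε * ∫ s in s₁..s₂, ‖f s‖ := hre
  -- choose partition size
  obtain ⟨n, hn⟩ := exists_nat_gt ((b - a)/δ)
  set step := (b - a) / (n + 1 : ℝ) with hstep
  have hnpos : (0:ℝ) < (n:ℝ) + 1 := by positivity
  have hstepnn : 0 ≤ step := by
    apply div_nonneg (by linarith) hnpos.le
  have hstepsmall : step < δ := by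
    rw [hstep, div_lt_iff₀ hnpos]
    have h1 : (b - a)/δ < (n:ℝ) + 1 := lt_trans hn (by linarith)
    calc b - a = ((b-a)/δ) * δ := by field_simp
      _ < ((n:ℝ) + 1) * δ := by
          apply mul_lt_mul_of_pos_right h1 hδ
      _ = δ * ((n:ℝ) + 1) := by ring
  set t : ℕ → ℝ := fun i => a + i * step with ht
  have htmem : ∀ i : ℕ, i ≤ n + 1 → t i ∈ Set.Icc a b := by
    intro i hi
    constructor
    · simp only [ht]
      nlinarith [Nat.cast_nonneg (α := ℝ) i, hstepnn]
    · simp only [ht]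
      have hile : (i:ℝ) ≤ (n:ℝ) + 1 := by exact_mod_cast hi
      have : (i:ℝ) * step ≤ ((n:ℝ)+1) * step := mul_le_mul_of_nonneg_right hile hstepnn
      have h2 : ((n:ℝ)+1) * step = b - a := by
        rw [hstep]; field_simp
      linarith
  have hlast : t (n+1) = b := by
    simp only [ht]; push_cast; rw [hstep]; field_simp; ring
  have main : ∀ i : ℕ, i ≤ n + 1 →
      Φ (x (t i)) - Φ (x a) ≤ c * (t i - a) + ε * ∫ s in a..(t i), ‖f s‖ := by
    intro i
    induction i with
    | zero => intro _; simp [ht]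
    | succ i ih =>
      intro hi
      have hi' : i ≤ n + 1 := le_trans (Nat.le_succ i) hi
      have hIH := ih hi'
      have hmem1 := htmem i hi'
      have hmem2 := htmem (i+1) hi
      have hstepdiff : t (i+1) - t i = step := by simp only [ht]; push_cast; ring
      have hp := piece (t i) (t (i+1)) hmem1.1 (by simp only [ht]; push_cast; nlinarith [Nat.cast_nonneg (α := ℝ) i, hstepnn]) hmem2.2
        (by rw [hstepdiff]; exact hstepsmall)
      have hnorm1 : IntervalIntegrable (fun s => ‖f s‖) MeasureTheory.volume a (t i) := by
        apply hf.norm.mono_set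
        rw [Set.uIcc_of_le hmem1.1, Set.uIcc_of_le hab]
        exact Set.Icc_subset_Icc le_rfl hmem1.2
      have hnorm2 : IntervalIntegrable (fun s => ‖f s‖) MeasureTheory.volume (t i) (t (i+1)) := by
        apply hf.norm.mono_set
        rw [Set.uIcc_of_le (by simp only [ht]; push_cast; nlinarith [Nat.cast_nonneg (α := ℝ) i, hstepnn]), Set.uIcc_of_le hab]
        exact Set.Icc_subset_Icc hmem1.1 hmem2.2
      have hadd : (∫ s in a..(t i), ‖f s‖) + (∫ s in (t i)..(t (i+1)), ‖f s‖)
          = ∫ s in a..(t (i+1)), ‖f s‖ :=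
        intervalIntegral.integral_add_adjacent_intervals hnorm1 hnorm2
      have : Φ (x (t (i+1))) - Φ (x a) ≤
          c * (t i - a) + c * (t (i+1) - t i) +
          ε * ((∫ s in a..(t i), ‖f s‖) + ∫ s in (t i)..(t (i+1)), ‖f s‖) := by
        rw [mul_add]
        linarith
      rw [hadd] at this
      calc Φ (x (t (i+1))) - Φ (x a) ≤ _ := this
        _ = c * (t (i+1) - a) + ε * ∫ s in a..(t (i+1)), ‖f s‖ := by ring
  have hfinal := main (n+1) le_rfl
  rw [hlast] at hfinal
  have hεC : ε * C ≤ ε' := by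
    rw [hεdef, div_mul_eq_mul_div, div_le_iff₀ (by positivity)]
    nlinarith
  linarith

section Geom
variable {A : Type*} [Fintype A] [DecidableEq A] [Nonempty A]
  {h : (A → ℝ) → ℝ} {U : Set (A → ℝ)} (xstar : A → ℝ)
  (hU : IsOpen U) (hh : ContDiffOn ℝ 2 h U)

include hU hh


lemma hfd1 : ∀ y ∈ U, HasFDerivAt h (fderiv ℝ h y) y := by
  intro y hy
  exact ((hh.contDiffAt (hU.mem_nhds hy)).differentiableAt (by norm_num)).hasFDerivAt

lemma hfd2 : ∀ y ∈ U, HasFDerivAt (fderiv ℝ h) (fderiv ℝ (fderiv ℝ h) y) y := by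
  intro y hy
  have h1 : ContDiffAt ℝ 1 (fderiv ℝ h) y :=
    (hh.contDiffAt (hU.mem_nhds hy)).fderiv_right (by norm_num)
  exact (h1.differentiableAt (by norm_num)).hasFDerivAt

lemma hH2cont : ContinuousOn (fderiv ℝ (fderiv ℝ h)) U := by
  have h1 : ContDiffOn ℝ 1 (fderiv ℝ h) U := hh.fderiv_of_isOpen hU (by norm_num)
  exact h1.continuousOn_fderiv_of_isOpen hU (by norm_num)

lemma hPhideriv : ∀ y ∈ U,
    HasFDerivAt (fun z => h xstar - h z - fderiv ℝ h z (xstar - z))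
      ((fderiv ℝ (fderiv ℝ h) y).flip (y - xstar)) y := by
  intro y hy
  have hc : HasFDerivAt (fderiv ℝ h) (fderiv ℝ (fderiv ℝ h) y) y := hfd2 hU hh y hy
  have hu : HasFDerivAt (fun z => xstar - z)
      ((0 : (A → ℝ) →L[ℝ] (A → ℝ)) - ContinuousLinearMap.id ℝ (A → ℝ)) y :=
    (hasFDerivAt_const xstar y).sub (hasFDerivAt_id y)
  have happ := hc.clm_apply hu
  have hhy : HasFDerivAt h (fderiv ℝ h y) y := hfd1 hU hh y hy
  have htotal := ((hasFDerivAt_const (h xstar) y).sub hhy).sub happ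
  refine htotal.congr_fderiv ?_
  refine ContinuousLinearMap.ext fun u => ?_
  simp only [ContinuousLinearMap.flip_apply, ContinuousLinearMap.coe_sub',
    Pi.sub_apply, ContinuousLinearMap.add_apply, ContinuousLinearMap.coe_comp',
    Function.comp_apply, ContinuousLinearMap.zero_apply, ContinuousLinearMap.coe_id',
    id_eq, ContinuousLinearMap.sub_apply, ContinuousLinearMap.coe_zero']
  have : (fderiv ℝ (fderiv ℝ h) y) u (y - xstar) = -((fderiv ℝ (fderiv ℝ h) y) u (xstar - y)) := by
    rw [show y - xstar = -(xstar - y) by abel, map_neg]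
  rw [this]
  simp

lemma hPhi'cont : ContinuousOn (fun y => (fderiv ℝ (fderiv ℝ h) y).flip (y - xstar)) U := by
  have h1 : ContinuousOn (fun y => (fderiv ℝ (fderiv ℝ h) y).flip) U := by
    have := (ContinuousLinearMap.flipₗᵢ ℝ (A → ℝ) (A → ℝ) ℝ).continuous.comp_continuousOn
      (hH2cont hU hh)
    exact this
  exact h1.clm_apply ((continuous_id.sub continuous_const).continuousOn)

omit hU hh
lemma pi_single_decomp (u : A → ℝ) :
    u = ∑ α : A, u α • (Pi.single α (1:ℝ) : A → ℝ) := by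
  ext β
  simp [Finset.sum_apply, Pi.single_apply]

lemma bilin_eq (B : (A → ℝ) →L[ℝ] (A → ℝ) →L[ℝ] ℝ) (u w : A → ℝ) :
    B u w = u ⬝ᵥ (Matrix.of fun α β => B (Pi.single α 1) (Pi.single β 1)).mulVec w := by
  have key : ∀ α : A, B (Pi.single α 1) w = ∑ β : A, w β * B (Pi.single α 1) (Pi.single β 1) := by
    intro α
    conv_lhs => rw [pi_single_decomp w]
    rw [map_sum]
    exact Finset.sum_congr rfl fun β _ => by rw [_root_.map_smul, smul_eq_mul]
  have : B u w = ∑ α : A, ∑ β : A, u α * (w β * B (Pi.single α 1) (Pi.single β 1)) := by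
    conv_lhs => rw [pi_single_decomp u]
    rw [map_sum]
    simp only [ContinuousLinearMap.coe_sum', Finset.sum_apply]
    refine Finset.sum_congr rfl fun α _ => ?_
    rw [B.map_smul, ContinuousLinearMap.smul_apply, smul_eq_mul, key α, Finset.mul_sum]
  rw [this, dotProduct]
  refine Finset.sum_congr rfl fun α _ => ?_
  rw [Matrix.mulVec, dotProduct, Finset.mul_sum]
  refine Finset.sum_congr rfl fun β _ => ?_
  rw [Matrix.of_apply]
  ring

include hU hh
lemma hPhipos (hXU : stdSimplex ℝ A ⊆ U)
    (hpd : ∀ y ∈ stdSimplex ℝ A, (hessMat h y).PosDef)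
    (hxstarX : xstar ∈ stdSimplex ℝ A) :
    ∀ y ∈ stdSimplex ℝ A, y ≠ xstar → 0 < h xstar - h y - fderiv ℝ h y (xstar - y) := by
  intro y hy hyne
  set d := xstar - y with hdd
  have hd0 : d ≠ 0 := sub_ne_zero.2 (Ne.symm hyne)
  set p : ℝ → (A → ℝ) := fun τ => y + τ • d with hp
  have hpX : ∀ τ ∈ Set.Icc (0:ℝ) 1, p τ ∈ stdSimplex ℝ A := fun τ hτ =>
    (convex_stdSimplex ℝ A).add_smul_sub_mem hy hxstarX hτ
  have hline : ∀ τ : ℝ, HasDerivAt p d τ := by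
    intro τ
    simpa [hp] using ((hasDerivAt_id τ).smul_const d).const_add y
  set φ : ℝ → ℝ := fun τ => h (p τ) with hφ
  set φ' : ℝ → ℝ := fun τ => fderiv ℝ h (p τ) d with hφ'
  have hφder : ∀ τ ∈ Set.Icc (0:ℝ) 1, HasDerivAt φ (φ' τ) τ := fun τ hτ =>
    (hfd1 hU hh (p τ) (hXU (hpX τ hτ))).comp_hasDerivAt τ (hline τ)
  have hφ'der : ∀ τ ∈ Set.Icc (0:ℝ) 1,
      HasDerivAt φ' (fderiv ℝ (fderiv ℝ h) (p τ) d d) τ := by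
    intro τ hτ
    have hD : HasDerivAt (fun τ => fderiv ℝ h (p τ)) (fderiv ℝ (fderiv ℝ h) (p τ) d) τ :=
      (hfd2 hU hh (p τ) (hXU (hpX τ hτ))).comp_hasDerivAt τ (hline τ)
    have := hD.clm_apply (hasDerivAt_const τ d)
    simpa using this
  have hφ''pos : ∀ τ ∈ Set.Icc (0:ℝ) 1, 0 < fderiv ℝ (fderiv ℝ h) (p τ) d d := by
    intro τ hτ
    have hb := bilin_eq (fderiv ℝ (fderiv ℝ h) (p τ)) d d
    rw [hb]
    have := (hpd (p τ) (hpX τ hτ)).dotProduct_mulVec_pos hd0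
    simpa [hessMat, star_trivial] using this
  have hφc : ContinuousOn φ (Set.Icc 0 1) := fun τ hτ =>
    ((hφder τ hτ).continuousAt).continuousWithinAt
  have hφ'c : ContinuousOn φ' (Set.Icc 0 1) := fun τ hτ =>
    ((hφ'der τ hτ).continuousAt).continuousWithinAt
  have hmono : StrictMonoOn φ' (Set.Icc 0 1) := by
    apply strictMonoOn_of_deriv_pos (convex_Icc 0 1) hφ'c
    intro τ hτ
    rw [interior_Icc] at hτ
    rw [(hφ'der τ (Set.mem_Icc_of_Ioo hτ)).deriv]
    exact hφ''pos τ (Set.mem_Icc_of_Ioo hτ)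
  obtain ⟨c, hc, hslope⟩ := exists_hasDerivAt_eq_slope φ φ' (by norm_num) hφc
    (fun τ hτ => hφder τ (Set.mem_Icc_of_Ioo hτ))
  have h10 : φ 1 - φ 0 = φ' c := by rw [hslope]; ring
  have hcmp : φ' 0 < φ' c := hmono (Set.left_mem_Icc.2 (by norm_num))
    (Set.mem_Icc_of_Ioo hc) hc.1
  have hp0 : p 0 = y := by simp [hp]
  have hp1 : p 1 = xstar := by simp [hp, hdd]
  have : φ 1 = h xstar := by rw [hφ]; simp only []; rw [hp1]
  have h0 : φ 0 = h y := by rw [hφ]; simp only []; rw [hp0]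
  have h0' : φ' 0 = fderiv ℝ h y d := by rw [hφ']; simp only []; rw [hp0]
  rw [← this, ← h0, ← h0']
  linarith

omit hU hh

lemma proj_ineq (y xs vv Vy : A → ℝ)
    (G : Matrix A A ℝ) (hG : G.PosDef)
    (hproj : IsGProj G (tcone y) (G⁻¹.mulVec vv) Vy) (hd : (xs - y) ∈ tcone y) :
    Vy ⬝ᵥ G.mulVec (y - xs) ≤ vv ⬝ᵥ (y - xs) := by
  set d := xs - y with hdd
  set w := G⁻¹.mulVec vv with hw
  have hsym : ∀ a b : A → ℝ, a ⬝ᵥ G.mulVec b = b ⬝ᵥ G.mulVec a := by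
    intro a b
    rw [Matrix.dotProduct_mulVec a G b, dotProduct_comm]
    congr 1
    have : G.vecMul a = Gᵀ.mulVec a := by
      rw [← Matrix.mulVec_transpose]
    rw [this]
    have ht : Gᵀ = G := by
      have := hG.isHermitian.eq
      simpa [Matrix.conjTranspose_eq_transpose_of_trivial] using hG.isHermitian.eq
    rw [ht]
  -- key: (w - Vy) ⬝ᵥ G (d) ≤ 0
  have hq : ∀ lam : ℝ, 0 < lam → Vy + lam • d ∈ tcone y := by
    intro lam hlam
    constructor
    · have h1 : (∑ α, (Vy + lam • d) α) = (∑ α, Vy α) + lam * ∑ α, d α := by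
        simp [Finset.sum_add_distrib, Finset.mul_sum]
      rw [h1, hproj.1.1, hd.1]; ring
    · intro α hα
      have h2 : 0 ≤ lam * d α := mul_nonneg hlam.le (hd.2 α hα)
      simp only [Pi.add_apply, Pi.smul_apply, smul_eq_mul]
      exact add_nonneg (hproj.1.2 α hα) h2
  have hexp : ∀ lam : ℝ, qform G (w - (Vy + lam • d)) =
      qform G (w - Vy) - 2 * lam * ((w - Vy) ⬝ᵥ G.mulVec d) + lam ^ 2 * qform G d := by
    intro lam
    have hrw : w - (Vy + lam • d) = (w - Vy) - lam • d := by abel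
    rw [hrw]
    simp only [qform, Matrix.mulVec_sub, Matrix.mulVec_smul, sub_dotProduct,
      dotProduct_sub, smul_dotProduct, dotProduct_smul, smul_eq_mul]
    rw [hsym d w, hsym d Vy]
    ring
  have hc : (w - Vy) ⬝ᵥ G.mulVec d ≤ 0 := by
    by_cases hd0 : d = 0
    · simp [hd0]
    · have hqd : 0 < qform G d := by
        have := hG.dotProduct_mulVec_pos hd0
        simpa [qform, star_trivial] using this
      have hle : ∀ lam : ℝ, 0 < lam → (w - Vy) ⬝ᵥ G.mulVec d ≤ lam * qform G d / 2 := by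
        intro lam hlam
        have h1 := hproj.2 _ (hq lam hlam)
        rw [hexp lam] at h1
        nlinarith
      have : ∀ ε : ℝ, 0 < ε → (w - Vy) ⬝ᵥ G.mulVec d ≤ 0 + ε := by
        intro ε hε
        have h2 := hle (2 * ε / qform G d) (by positivity)
        rw [zero_add]
        calc (w - Vy) ⬝ᵥ G.mulVec d ≤ (2 * ε / qform G d) * qform G d / 2 := h2
          _ = ε := by field_simp
      exact le_of_forall_pos_le_add this
  have hGw : G.mulVec w = vv := by
    rw [hw, Matrix.mulVec_mulVec, Matrix.mul_nonsing_inv G (isUnit_iff_ne_zero.2 hG.det_pos.ne'), Matrix.one_mulVec]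
  have hwd : w ⬝ᵥ G.mulVec d = vv ⬝ᵥ d := by
    rw [hsym w d, hGw, dotProduct_comm]
  have hfin : vv ⬝ᵥ d ≤ Vy ⬝ᵥ G.mulVec d := by
    have := hc
    rw [sub_dotProduct, hwd] at this
    linarith
  have hyd : y - xs = -d := by rw [hdd]; abel
  rw [hyd, Matrix.mulVec_neg, dotProduct_neg, dotProduct_neg]
  linarith

lemma hkey {v : (A → ℝ) → (A → ℝ)} {V : (A → ℝ) → (A → ℝ)} {y : A → ℝ}
    (hy : y ∈ stdSimplex ℝ A) (hxstarX : xstar ∈ stdSimplex ℝ A)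
    (hpdy : (hessMat h y).PosDef)
    (hVy : IsGProj (hessMat h y) (tcone y) ((hessMat h y)⁻¹.mulVec (v y)) (V y)) :
    (fderiv ℝ (fderiv ℝ h) y).flip (y - xstar) (V y) ≤ v y ⬝ᵥ (y - xstar) := by
  have hd : (xstar - y) ∈ tcone y := by
    constructor
    · have h1 : (∑ α, (xstar - y) α) = (∑ α, xstar α) - ∑ α, y α := by
        simp [Finset.sum_sub_distrib]
      rw [h1, hxstarX.2, hy.2]; ring
    · intro α hα
      have := hxstarX.1 α
      simp only [Pi.sub_apply, hα, sub_zero]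
      exact this
  have hpi := proj_ineq y xstar (v y) (V y) (hessMat h y) hpdy hVy hd
  rw [ContinuousLinearMap.flip_apply]
  calc fderiv ℝ (fderiv ℝ h) y (V y) (y - xstar)
      = V y ⬝ᵥ (hessMat h y).mulVec (y - xstar) := bilin_eq _ _ _
    _ ≤ v y ⬝ᵥ (y - xstar) := hpi

end Geom



/-- asymptotic stability of an ESS under (discontinuous) Hessian dynamics.
If `x*` is an evolutionarily stable state, then (a) it is Lyapunov stable for the dynamics
`ẋ = V(x)` (with `V(y)` the `H(y)`-projection of `H(y)⁻¹ v(y)` onto `TC_X(y)`), and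
(b) it attracts all Carathéodory solutions starting in some neighborhood of `x*`. -/

theorem stmt_11 {A : Type*} [Fintype A] [DecidableEq A] [Nonempty A]
    (v : (A → ℝ) → (A → ℝ)) (hvcont : ContinuousOn v (stdSimplex ℝ A))
    (h : (A → ℝ) → ℝ) (U : Set (A → ℝ)) (hU : IsOpen U) (hXU : stdSimplex ℝ A ⊆ U)
    (hh : ContDiffOn ℝ 2 h U)
    (hpd : ∀ y ∈ stdSimplex ℝ A, (hessMat h y).PosDef)
    (V : (A → ℝ) → (A → ℝ))
    (hV : ∀ y ∈ stdSimplex ℝ A,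
      IsGProj (hessMat h y) (tcone y) ((hessMat h y)⁻¹.mulVec (v y)) (V y))
    (xstar : A → ℝ) (hxstarX : xstar ∈ stdSimplex ℝ A)
    (W : Set (A → ℝ)) (hW : IsOpen W) (hxW : xstar ∈ W)
    (hESS : ∀ y ∈ W ∩ stdSimplex ℝ A, y ≠ xstar → v y ⬝ᵥ (y - xstar) < 0) :
    (∀ U1 : Set (A → ℝ), IsOpen U1 → xstar ∈ U1 →
      ∃ U2 : Set (A → ℝ), IsOpen U2 ∧ xstar ∈ U2 ∧
        ∀ x : ℝ → (A → ℝ), IsSol V x → x 0 ∈ U2 → ∀ t : ℝ, 0 ≤ t → x t ∈ U1) ∧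
    (∃ U0 : Set (A → ℝ), IsOpen U0 ∧ xstar ∈ U0 ∧
      ∀ x : ℝ → (A → ℝ), IsSol V x → x 0 ∈ U0 →
        Tendsto (fun t => x t) atTop (nhds xstar)) := by
  classical
  have hXcompact : IsCompact (stdSimplex ℝ A) := isCompact_stdSimplex ℝ A
  have hXconvex : Convex ℝ (stdSimplex ℝ A) := convex_stdSimplex ℝ A
  set Φ : (A → ℝ) → ℝ := fun y => h xstar - h y - fderiv ℝ h y (xstar - y) with hΦdef
  set Φ' : (A → ℝ) → ((A → ℝ) →L[ℝ] ℝ) :=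
    fun y => (fderiv ℝ (fderiv ℝ h) y).flip (y - xstar) with hΦ'def
  have hΦd : ∀ y ∈ U, HasFDerivAt Φ (Φ' y) y := hPhideriv xstar hU hh
  have hΦ'c : ContinuousOn Φ' U := hPhi'cont xstar hU hh
  have hΦposX : ∀ y ∈ stdSimplex ℝ A, y ≠ xstar → 0 < Φ y :=
    hPhipos xstar hU hh hXU hpd hxstarX
  have hΦzero : Φ xstar = 0 := by
    rw [hΦdef]; simp
  have hΦnonneg : ∀ y ∈ stdSimplex ℝ A, 0 ≤ Φ y := by
    intro y hy
    rcases eq_or_ne y xstar with rfl | hne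
    · rw [hΦzero]
    · exact (hΦposX y hy hne).le
  have hkey' : ∀ y ∈ stdSimplex ℝ A, Φ' y (V y) ≤ v y ⬝ᵥ (y - xstar) := by
    intro y hy
    exact hkey xstar hy hxstarX (hpd y hy) (hV y hy)
  have hg0 : ∀ y ∈ stdSimplex ℝ A, y ∈ W → Φ' y (V y) ≤ 0 := by
    intro y hyX hyW
    rcases eq_or_ne y xstar with rfl | hne
    · rw [hΦ'def]; simp
    · exact (hkey' y hyX).trans (hESS y ⟨hyW, hyX⟩ hne).le
  -- Lyapunov decrease along solutions
  have solfacts : ∀ x : ℝ → (A → ℝ), IsSol V x → ∀ a b : ℝ, 0 ≤ a → a ≤ b →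
      ∀ c : ℝ, (∀ s, a ≤ s → s ≤ b → Φ' (x s) (V (x s)) ≤ c) →
      Φ (x b) - Φ (x a) ≤ c * (b - a) := by
    intro x hsol a b ha hab c hc
    obtain ⟨hsolX, hsolc, hsoli, hsoleq⟩ := hsol
    have hb : (0:ℝ) ≤ b := le_trans ha hab
    refine core Φ Φ' (stdSimplex ℝ A) hXcompact hXconvex
      (fun y hy => hΦd y (hXU hy)) (hΦ'c.mono hXU) x (fun s => V (x s)) a b c hab
      (hsolc.mono ?_) (fun t ht => hsolX t (le_trans ha ht.1)) ?_ ?_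
      (fun s hs => hc s hs.1 hs.2)
    · intro s hs; exact le_trans ha hs.1
    · apply (hsoli b hb).mono_set
      rw [Set.uIcc_of_le hab, Set.uIcc_of_le hb]
      exact Set.Icc_subset_Icc ha le_rfl
    · intro s t hs hst htb
      have hs0 : (0:ℝ) ≤ s := le_trans ha hs
      have ht0 : (0:ℝ) ≤ t := le_trans hs0 hst
      rw [hsoleq t ht0, hsoleq s hs0]
      have := intervalIntegral.integral_interval_sub_left (hsoli t ht0) (hsoli s hs0)
      rw [← this]
      abel
  -- stability kernel
  have stab : ∀ r : ℝ, 0 < r → Metric.closedBall xstar r ⊆ W →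
      ∃ ρ : ℝ, 0 < ρ ∧ ρ ≤ r ∧ ∀ x : ℝ → (A → ℝ), IsSol V x →
        x 0 ∈ Metric.ball xstar ρ → ∀ t : ℝ, 0 ≤ t → x t ∈ Metric.ball xstar r := by
    intro r hr hrW
    by_cases hS : (Metric.sphere xstar r ∩ stdSimplex ℝ A).Nonempty
    · -- sphere meets the simplex: use the Lyapunov function
      have hScompact : IsCompact (Metric.sphere xstar r ∩ stdSimplex ℝ A) :=
        hXcompact.inter_left Metric.isClosed_sphere
      have hΦcS : ContinuousOn Φ (Metric.sphere xstar r ∩ stdSimplex ℝ A) :=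
        fun y hy => (hΦd y (hXU hy.2)).continuousAt.continuousWithinAt
      obtain ⟨y₀, hy₀, hy₀min'⟩ := hScompact.exists_isMinOn hS hΦcS
      have hy₀min := isMinOn_iff.1 hy₀min'
      have hy₀ne : y₀ ≠ xstar := by
        intro heq
        have := hy₀.1
        rw [heq] at this
        simp [Metric.mem_sphere] at this
        exact hr.ne this
      have hm : 0 < Φ y₀ := hΦposX y₀ hy₀.2 hy₀ne
      have hΦcont : ContinuousAt Φ xstar := (hΦd xstar (hXU hxstarX)).continuousAt
      obtain ⟨δ, hδ, hδprop⟩ := Metric.continuousAt_iff.1 hΦcont (Φ y₀) hm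
      set ρ := min δ r with hρdef
      have hρ : 0 < ρ := lt_min hδ hr
      have hsmall : ∀ z, dist z xstar < ρ → Φ z < Φ y₀ := by
        intro z hz
        have := hδprop (lt_of_lt_of_le hz (min_le_left _ _))
        rw [Real.dist_eq, hΦzero, sub_zero] at this
        exact lt_of_le_of_lt (le_abs_self _) this
      refine ⟨ρ, hρ, min_le_right _ _, ?_⟩
      intro x hsol hx0 t ht
      by_contra hesc
      have hesc' : r ≤ dist (x t) xstar := not_lt.1 (by simpa [Metric.mem_ball] using hesc)
      have hdcont : ContinuousOn (fun s => dist (x s) xstar) (Set.Icc 0 t) :=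
        ((continuous_id.dist continuous_const).comp_continuousOn
          (hsol.2.1.mono (fun s hs => hs.1)))
      set S := (Set.Icc 0 t) ∩ (fun s => dist (x s) xstar) ⁻¹' (Set.Ici r) with hSdef
      have hSclosed : IsClosed S :=
        hdcont.preimage_isClosed_of_isClosed isClosed_Icc isClosed_Ici
      have hSne : S.Nonempty := ⟨t, ⟨⟨ht, le_rfl⟩, hesc'⟩⟩
      have hSbdd : BddBelow S := ⟨0, fun s hs => hs.1.1⟩
      set T₀ := sInf S with hT₀def
      have hT₀S : T₀ ∈ S := hSclosed.csInf_mem hSne hSbdd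
      have hT₀0 : 0 ≤ T₀ := hT₀S.1.1
      have hT₀t : T₀ ≤ t := hT₀S.1.2
      have hx0d : dist (x 0) xstar < ρ := by simpa [Metric.mem_ball] using hx0
      have hT₀pos : 0 < T₀ := by
        rcases hT₀0.lt_or_eq with hlt | heq
        · exact hlt
        · exfalso
          have := hT₀S.2
          rw [← heq] at this
          have : r ≤ dist (x 0) xstar := this
          have hρr : ρ ≤ r := min_le_right _ _
          linarith
      have hlt : ∀ s, 0 ≤ s → s < T₀ → dist (x s) xstar < r := by
        intro s hs0 hsT
        by_contra hge
        have hge' : r ≤ dist (x s) xstar := not_lt.1 hge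
        have hsS : s ∈ S := ⟨⟨hs0, le_trans hsT.le hT₀t⟩, hge'⟩
        exact absurd (csInf_le hSbdd hsS) (not_le.2 hsT)
      have hT₀le : dist (x T₀) xstar ≤ r := by
        have hcl : T₀ ∈ closure (Set.Ico 0 T₀) := by
          rw [closure_Ico hT₀pos.ne]
          exact Set.right_mem_Icc.2 hT₀0
        haveI := mem_closure_iff_nhdsWithin_neBot.1 hcl
        have htend : Filter.Tendsto (fun s => dist (x s) xstar)
            (nhdsWithin T₀ (Set.Ico 0 T₀)) (nhds (dist (x T₀) xstar)) :=
          (hdcont.continuousWithinAt ⟨hT₀0, hT₀t⟩).mono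
            (fun s hs => ⟨hs.1, le_trans hs.2.le hT₀t⟩)
        exact le_of_tendsto htend (Filter.eventually_of_mem self_mem_nhdsWithin
          (fun s hs => (hlt s hs.1 hs.2).le))
      have hT₀eq : dist (x T₀) xstar = r := le_antisymm hT₀le hT₀S.2
      have hball : ∀ s, 0 ≤ s → s ≤ T₀ → x s ∈ Metric.closedBall xstar r := by
        intro s hs0 hsT
        rcases hsT.lt_or_eq with hlt' | heq
        · exact Metric.mem_closedBall.2 (hlt s hs0 hlt').le
        · rw [heq]; exact Metric.mem_closedBall.2 hT₀eq.le
      have hdec := solfacts x hsol 0 T₀ le_rfl hT₀0 0 (fun s hs0 hsT =>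
        hg0 (x s) (hsol.1 s hs0) (hrW (hball s hs0 hsT)))
      rw [zero_mul] at hdec
      have h1 : Φ (x T₀) ≤ Φ (x 0) := by linarith [hdec]
      have h2 : Φ (x 0) < Φ y₀ := hsmall (x 0) hx0d
      have h3 : Φ y₀ ≤ Φ (x T₀) := hy₀min (x T₀)
        ⟨Metric.mem_sphere.2 hT₀eq, hsol.1 T₀ hT₀0⟩
      linarith
    · -- sphere misses the simplex: solutions can never reach distance r
      refine ⟨r, hr, le_rfl, ?_⟩
      intro x hsol hx0 t ht
      by_contra hesc
      have hesc' : r ≤ dist (x t) xstar := not_lt.1 (by simpa [Metric.mem_ball] using hesc)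
      have hx0d : dist (x 0) xstar < r := by simpa [Metric.mem_ball] using hx0
      have hdcont : ContinuousOn (fun s => dist (x s) xstar) (Set.Icc 0 t) :=
        ((continuous_id.dist continuous_const).comp_continuousOn
          (hsol.2.1.mono (fun s hs => hs.1)))
      have hmem : r ∈ (fun s => dist (x s) xstar) '' Set.Icc 0 t := by
        apply intermediate_value_Icc ht hdcont
        exact ⟨hx0d.le, hesc'⟩
      obtain ⟨s, hs, hseq⟩ := hmem
      exact hS ⟨x s, Metric.mem_sphere.2 hseq, hsol.1 s hs.1⟩
  constructor
  · -- (a) Lyapunov stability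
    intro U1 hU1 hxU1
    have hmem : U1 ∩ W ∈ nhds xstar := (hU1.inter hW).mem_nhds ⟨hxU1, hxW⟩
    obtain ⟨r, hr, hball⟩ := Metric.nhds_basis_closedBall.mem_iff.1 hmem
    obtain ⟨ρ, hρ, hρr, hstab⟩ := stab r hr (fun z hz => (hball hz).2)
    refine ⟨Metric.ball xstar ρ, Metric.isOpen_ball, Metric.mem_ball_self hρ, ?_⟩
    intro x hsol hx0 t ht
    exact (hball (Metric.ball_subset_closedBall (hstab x hsol hx0 t ht))).1
  · -- (b) attraction
    obtain ⟨r₀, hr₀, hball₀⟩ := Metric.nhds_basis_closedBall.mem_iff.1 (hW.mem_nhds hxW)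
    obtain ⟨ρ₀, hρ₀, hρ₀r, hstab₀⟩ := stab r₀ hr₀ hball₀
    refine ⟨Metric.ball xstar ρ₀, Metric.isOpen_ball, Metric.mem_ball_self hρ₀, ?_⟩
    intro x hsol hx0
    have hstay : ∀ t : ℝ, 0 ≤ t → x t ∈ Metric.ball xstar r₀ := hstab₀ x hsol hx0
    have hstayW : ∀ t : ℝ, 0 ≤ t → x t ∈ W :=
      fun t ht => hball₀ (Metric.ball_subset_closedBall (hstay t ht))
    have hmon : ∀ a b : ℝ, 0 ≤ a → a ≤ b → Φ (x b) ≤ Φ (x a) := by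
      intro a b ha hab
      have := solfacts x hsol a b ha hab 0 (fun s hs0 hsb =>
        hg0 (x s) (hsol.1 s (le_trans ha hs0)) (hstayW s (le_trans ha hs0)))
      rw [zero_mul] at this
      linarith
    have hdec : ∀ η : ℝ, 0 < η → ∃ T : ℝ, 0 ≤ T ∧ Φ (x T) < η := by
      intro η hη
      by_contra hcon
      push_neg at hcon
      have hcon' : ∀ T : ℝ, 0 ≤ T → η ≤ Φ (x T) := fun T hT => hcon T hT
      have hΦcont : ContinuousAt Φ xstar := (hΦd xstar (hXU hxstarX)).continuousAt
      obtain ⟨δ, hδ, hδprop⟩ := Metric.continuousAt_iff.1 hΦcont η hη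
      have hsmall : ∀ z, dist z xstar < δ → Φ z < η := by
        intro z hz
        have := hδprop hz
        rw [Real.dist_eq, hΦzero, sub_zero] at this
        exact lt_of_le_of_lt (le_abs_self _) this
      set K' := (stdSimplex ℝ A ∩ Metric.closedBall xstar r₀) \ Metric.ball xstar δ
        with hK'def
      have hK'c : IsCompact K' :=
        ((hXcompact.inter_right Metric.isClosed_closedBall).inter_right
          Metric.isOpen_ball.isClosed_compl)
      have hxtK' : ∀ t : ℝ, 0 ≤ t → x t ∈ K' := by
        intro t ht
        refine ⟨⟨hsol.1 t ht, Metric.ball_subset_closedBall (hstay t ht)⟩, ?_⟩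
        intro hmem
        exact absurd (hsmall (x t) (Metric.mem_ball.1 hmem)) (not_lt.2 (hcon' t ht))
      have hK'ne : K'.Nonempty := ⟨x 0, hxtK' 0 le_rfl⟩
      have hvcont' : ContinuousOn (fun y => v y ⬝ᵥ (y - xstar)) K' := by
        have : ContinuousOn (fun y => ∑ α : A, v y α * (y α - xstar α)) K' := by
          apply continuousOn_finset_sum
          intro α _
          exact (((continuous_apply α).comp_continuousOn
            (hvcont.mono (fun z hz => hz.1.1))).mul
            (((continuous_apply α).comp (continuous_id.sub continuous_const)).continuousOn))
        simpa [dotProduct] using this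
      obtain ⟨y₁, hy₁, hy₁max'⟩ := hK'c.exists_isMaxOn hK'ne hvcont'
      have hy₁max := isMaxOn_iff.1 hy₁max'
      have hy₁ne : y₁ ≠ xstar := by
        intro heq
        apply hy₁.2
        rw [heq]
        exact Metric.mem_ball_self hδ
      have hc₁ : v y₁ ⬝ᵥ (y₁ - xstar) < 0 :=
        hESS y₁ ⟨hball₀ hy₁.1.2, hy₁.1.1⟩ hy₁ne
      set c₁ := v y₁ ⬝ᵥ (y₁ - xstar) with hc₁def
      set T := (Φ (x 0) + 1) / (-c₁) with hTdef
      have hT0 : 0 ≤ T := by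
        apply div_nonneg _ (by linarith)
        have := hΦnonneg (x 0) (hsol.1 0 le_rfl)
        linarith
      have hcore := solfacts x hsol 0 T le_rfl hT0 c₁ ?_
      · have hTc : c₁ * (T - 0) = -(Φ (x 0) + 1) := by
          have hne : -c₁ ≠ 0 := ne_of_gt (by linarith : (0:ℝ) < -c₁)
          rw [hTdef, sub_zero, mul_comm, div_mul_eq_mul_div, div_eq_iff hne]
          ring
        rw [hTc] at hcore
        have := hΦnonneg (x T) (hsol.1 T hT0)
        linarith
      · intro s hs0 hsT
        have hsX := hsol.1 s hs0
        calc Φ' (x s) (V (x s)) ≤ v (x s) ⬝ᵥ (x s - xstar) := hkey' (x s) hsX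
          _ ≤ c₁ := hy₁max (x s) (hxtK' s hs0)
    rw [Metric.tendsto_atTop]
    intro ε hε
    set Sε := (stdSimplex ℝ A ∩ Metric.closedBall xstar r₀) \ Metric.ball xstar ε
      with hSεdef
    have hSεc : IsCompact Sε :=
      ((hXcompact.inter_right Metric.isClosed_closedBall).inter_right
        Metric.isOpen_ball.isClosed_compl)
    by_cases hSεne : Sε.Nonempty
    · have hΦcSε : ContinuousOn Φ Sε :=
        fun y hy => (hΦd y (hXU hy.1.1)).continuousAt.continuousWithinAt
      obtain ⟨y₂, hy₂, hy₂min'⟩ := hSεc.exists_isMinOn hSεne hΦcSε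
      have hy₂min := isMinOn_iff.1 hy₂min'
      have hy₂ne : y₂ ≠ xstar := by
        intro heq
        apply hy₂.2
        rw [heq]
        exact Metric.mem_ball_self hε
      have hμ : 0 < Φ y₂ := hΦposX y₂ hy₂.1.1 hy₂ne
      obtain ⟨T, hT0, hT⟩ := hdec (Φ y₂) hμ
      refine ⟨T, ?_⟩
      intro t ht
      have htT : 0 ≤ t := le_trans hT0 ht
      have hΦt : Φ (x t) < Φ y₂ := lt_of_le_of_lt (hmon T t hT0 ht) hT
      by_contra hfar
      have hfar' : x t ∈ Sε := by
        refine ⟨⟨hsol.1 t htT, Metric.ball_subset_closedBall (hstay t htT)⟩, ?_⟩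
        intro hmem
        exact hfar (Metric.mem_ball.1 hmem)
      exact absurd (hy₂min (x t) hfar') (not_le.2 hΦt)
    · refine ⟨0, ?_⟩
      intro t ht
      by_contra hfar
      apply hSεne
      refine ⟨x t, ⟨hsol.1 t ht, Metric.ball_subset_closedBall (hstay t ht)⟩, ?_⟩
      intro hmem
      exact hfar (Metric.mem_ball.1 hmem)
end
end

section
/- Let A be a finite nonempty set, X the simplex in ℝ^A with interior X°, and let payoffs be given by random matching: v(x) = M·x for a fixed real matrix M indexed by A × A. Let h be twice continuously differentiable on an open set containing X, with Hessian H(y) positive definite at each y ∈ X°. Let x : [0,∞) → X° be differentiable with x'(t) = V(x(t)), where V(y) is the H(y)-projection of H(y)⁻¹ v(y) onto ℝ₀^A = {z : ∑_α z_α = 0}, and suppose the trajectory {x(t) : t ≥ 0} is contained in a compact subset of X°. Then the time-averaged trajectory x̄(t) = (1/t) ∫₀ᵗ x(s) ds converges to the set of Nash equilibria of v: dist(x̄(t), {x* ∈ X : v(x*)·(x − x*) ≤ 0 for all x ∈ X}) → 0 as t → ∞. -/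
open Matrix Filter Topology

noncomputable section

/-- The relative interior of the simplex (all coordinates positive, summing to one). -/
def intSimplex (A : Type*) [Fintype A] : Set (A → ℝ) :=
  {x | (∀ α, 0 < x α) ∧ (∑ α, x α) = 1}

lemma proj_key {A : Type*} [Fintype A] [DecidableEq A] (G : Matrix A A ℝ) (hG : G.PosDef)
    (v VV : A → ℝ)
    (hproj : IsGProj G {z : A → ℝ | (∑ α, z α) = 0} (G⁻¹.mulVec v) VV)
    (α β : A) : v α - G.mulVec VV α = v β - G.mulVec VV β := by
  have ht : Gᵀ = G := by
    have := hG.1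
    exact (Matrix.conjTranspose_eq_transpose_of_trivial G).symm.trans this
  have hsymm : ∀ a b : A → ℝ, a ⬝ᵥ G.mulVec b = b ⬝ᵥ G.mulVec a := by
    intro a b
    rw [Matrix.dotProduct_mulVec, ← Matrix.mulVec_transpose, ht, dotProduct_comm]
  have horth : ∀ z : A → ℝ, (∑ a, z a) = 0 → (v - G.mulVec VV) ⬝ᵥ z = 0 := by
    intro z hz
    by_cases hz0 : z = 0
    · simp [hz0]
    set w := G⁻¹.mulVec v with hw
    set u := w - VV with hu
    have hbb : 0 < z ⬝ᵥ G.mulVec z := by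
      have := hG.dotProduct_mulVec_pos hz0
      simpa using this
    set a := u ⬝ᵥ G.mulVec z with ha
    set bb := z ⬝ᵥ G.mulVec z with hbbdef
    have key : ∀ t : ℝ, 0 ≤ -2*t*a + t^2*bb := by
      intro t
      have hmem : VV + t • z ∈ {z : A → ℝ | (∑ α, z α) = 0} := by
        have h1 : (∑ α, VV α) = 0 := hproj.1
        simp only [Set.mem_setOf_eq, Pi.add_apply, Pi.smul_apply, smul_eq_mul]
        rw [Finset.sum_add_distrib, ← Finset.mul_sum, h1, hz]
        ring
      have hineq := hproj.2 _ hmem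
      have hexp : qform G (w - (VV + t • z)) = qform G u - 2*t*a + t^2*bb := by
        have : w - (VV + t • z) = u - t • z := by rw [hu]; abel
        rw [this]
        simp only [qform, Matrix.mulVec_sub, Matrix.mulVec_smul, dotProduct_sub, sub_dotProduct,
          dotProduct_smul, smul_dotProduct, smul_eq_mul]
        have e := hsymm z u
        linear_combination (-t) * e
      rw [hexp] at hineq
      have : qform G (w - VV) = qform G u := by rw [hu]
      linarith [hineq, this.symm.le]
    have ha0 : a = 0 := by
      by_contra hane
      have h1 := key (a / bb)
      have h2 : -2*(a/bb)*a + (a/bb)^2*bb = -(a^2/bb) := by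
        field_simp
        ring
      rw [h2] at h1
      have : a^2 / bb ≤ 0 := by linarith
      have h3 : 0 < a^2 / bb := div_pos (by positivity) hbb
      linarith
    have hGu : G.mulVec u = v - G.mulVec VV := by
      rw [hu, Matrix.mulVec_sub, hw, Matrix.mulVec_mulVec, Matrix.mul_nonsing_inv _ (isUnit_iff_ne_zero.2 hG.det_pos.ne'), Matrix.one_mulVec]
    calc (v - G.mulVec VV) ⬝ᵥ z = G.mulVec u ⬝ᵥ z := by rw [hGu]
      _ = u ⬝ᵥ G.mulVec z := by rw [dotProduct_comm]; exact (hsymm z u)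
      _ = 0 := ha0
  by_cases hab : α = β
  · rw [hab]
  · have hz : (∑ a, (Pi.single α 1 - Pi.single β 1 : A → ℝ) a) = 0 := by
      simp [Finset.sum_sub_distrib, Finset.sum_pi_single']
    have h5 := horth _ hz
    simp only [dotProduct_sub, dotProduct_single, sub_dotProduct, mul_one, Pi.sub_apply] at h5
    linarith

lemma limit_key {A : Type*} [Fintype A] [DecidableEq A] [Nonempty A] (M : Matrix A A ℝ)
    (f : ℝ → (A → ℝ))
    (hmem : ∀ᶠ t in atTop, f t ∈ stdSimplex ℝ A)
    (hd : ∀ α β : A, Tendsto (fun t => M.mulVec (f t) α - M.mulVec (f t) β) atTop (𝓝 0)) :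
    Tendsto (fun t : ℝ => Metric.infDist (f t)
        {xs ∈ stdSimplex ℝ A | ∀ y ∈ stdSimplex ℝ A, M.mulVec xs ⬝ᵥ (y - xs) ≤ 0})
      atTop (𝓝 0) := by
  set NE := {xs ∈ stdSimplex ℝ A | ∀ y ∈ stdSimplex ℝ A, M.mulVec xs ⬝ᵥ (y - xs) ≤ 0} with hNE
  by_contra hcon
  rw [Metric.tendsto_nhds] at hcon
  push_neg at hcon
  obtain ⟨ε, hε, hfreq⟩ := hcon
  have hboth := hmem.and_frequently hfreq
  have hseq : ∀ n : ℕ, ∃ t, (n:ℝ) ≤ t ∧ (f t ∈ stdSimplex ℝ A ∧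
      ε ≤ dist (Metric.infDist (f t) NE) 0) := by
    intro n
    obtain ⟨t, ht1, ht2⟩ := frequently_atTop.mp hboth (n:ℝ)
    exact ⟨t, ht1, ht2⟩
  choose u hu hP using hseq
  have hutop : Tendsto u atTop atTop :=
    tendsto_atTop_mono hu tendsto_natCast_atTop_atTop
  obtain ⟨a, haS, φ, hφ, hconv⟩ :=
    (isCompact_stdSimplex ℝ A).tendsto_subseq (fun n => (hP n).1)
  have ha_eq : ∀ α β : A, M.mulVec a α = M.mulVec a β := by
    intro α β
    have hc : Continuous (fun w : A → ℝ => M.mulVec w α - M.mulVec w β) := by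
      apply Continuous.sub <;>
      · simp only [Matrix.mulVec, dotProduct]
        exact continuous_finset_sum _ fun j _ => continuous_const.mul (continuous_apply j)
    have h1 : Tendsto (fun n => M.mulVec (f (u (φ n))) α - M.mulVec (f (u (φ n))) β)
        atTop (𝓝 (M.mulVec a α - M.mulVec a β)) := (hc.tendsto a).comp hconv
    have h2 : Tendsto (fun n => M.mulVec (f (u (φ n))) α - M.mulVec (f (u (φ n))) β)
        atTop (𝓝 0) := (hd α β).comp (hutop.comp hφ.tendsto_atTop)
    have := tendsto_nhds_unique h1 h2
    linarith
  have haNE : a ∈ NE := by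
    refine ⟨haS, fun y hy => ?_⟩
    set α₀ := Classical.arbitrary A
    have : M.mulVec a ⬝ᵥ (y - a) = M.mulVec a α₀ * ∑ γ, (y γ - a γ) := by
      rw [Finset.mul_sum]
      simp only [dotProduct, Pi.sub_apply]
      exact Finset.sum_congr rfl fun γ _ => by rw [ha_eq γ α₀]
    rw [this, Finset.sum_sub_distrib, hy.2, haS.2]
    simp
  have hdist : Tendsto (fun n => dist (f (u (φ n))) a) atTop (𝓝 0) :=
    tendsto_iff_dist_tendsto_zero.mp hconv
  have hle : ∀ n, ε ≤ dist (f (u (φ n))) a := by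
    intro n
    have h1 := (hP (φ n)).2
    rw [Real.dist_eq, sub_zero, abs_of_nonneg Metric.infDist_nonneg] at h1
    exact le_trans h1 (Metric.infDist_le_dist_of_mem haNE)
  have := ge_of_tendsto hdist (Eventually.of_forall hle)
  linarith

/-- convergence of time averages under Hessian dynamics in random matching
games (`v(x) = M x`).  If the interior solution `x'(t) = V(x(t))` stays in a compact subset
of the interior of the simplex, then the time average `x̄(t) = (1/t)∫₀ᵗ x(s) ds` converges to
the set of Nash equilibria. -/
theorem stmt_12 {A : Type*} [Fintype A] [DecidableEq A] [Nonempty A]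
    (M : Matrix A A ℝ)
    (h : (A → ℝ) → ℝ) (U : Set (A → ℝ)) (hU : IsOpen U) (hXU : stdSimplex ℝ A ⊆ U)
    (hh : ContDiffOn ℝ 2 h U)
    (hpd : ∀ y ∈ intSimplex A, (hessMat h y).PosDef)
    (V : (A → ℝ) → (A → ℝ))
    (hV : ∀ y ∈ intSimplex A,
      IsGProj (hessMat h y) {z : A → ℝ | (∑ α, z α) = 0}
        ((hessMat h y)⁻¹.mulVec (M.mulVec y)) (V y))
    (x : ℝ → (A → ℝ)) (hxint : ∀ t : ℝ, 0 ≤ t → x t ∈ intSimplex A)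
    (hx' : ∀ t : ℝ, 0 ≤ t → HasDerivWithinAt x (V (x t)) (Set.Ici 0) t)
    (K : Set (A → ℝ)) (hK : IsCompact K) (hKint : K ⊆ intSimplex A)
    (hxK : ∀ t : ℝ, 0 ≤ t → x t ∈ K) :
    Tendsto (fun t : ℝ => Metric.infDist (t⁻¹ • ∫ s in (0:ℝ)..t, x s)
        {xs ∈ stdSimplex ℝ A | ∀ y ∈ stdSimplex ℝ A, M.mulVec xs ⬝ᵥ (y - xs) ≤ 0})
      atTop (nhds 0) := by
  classical
  have hint_sub : intSimplex A ⊆ stdSimplex ℝ A := fun y hy => ⟨fun γ => (hy.1 γ).le, hy.2⟩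
  have hxc : ContinuousOn x (Set.Ici 0) := fun t ht => (hx' t ht).continuousWithinAt
  have hxcomp : ∀ γ : A, ContinuousOn (fun s => x s γ) (Set.Ici 0) :=
    fun γ => (continuous_apply γ).comp_continuousOn hxc
  have hxii : ∀ t : ℝ, 0 ≤ t → IntervalIntegrable x MeasureTheory.volume 0 t := by
    intro t ht
    apply ContinuousOn.intervalIntegrable
    rw [Set.uIcc_of_le ht]
    exact hxc.mono (Set.Icc_subset_Ici_self)
  set F := fderiv ℝ h with hF
  have hCAt : ∀ y ∈ intSimplex A, ContDiffAt ℝ 2 h y :=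
    fun y hy => hh.contDiffAt (hU.mem_nhds (hXU (hint_sub hy)))
  have hsym : ∀ y ∈ intSimplex A, ∀ vv ww : A → ℝ, fderiv ℝ F y vv ww = fderiv ℝ F y ww vv :=
    fun y hy => (hCAt y hy).isSymmSndFDerivAt (by norm_num)
  -- the derivative of F at points of the interior simplex
  have hFd : ∀ y ∈ intSimplex A, HasFDerivAt F (fderiv ℝ F y) y := by
    intro y hy
    have h1 : ContDiffAt ℝ 1 F (x := y) := (hCAt y hy).fderiv_right (by norm_num)
    exact (h1.differentiableAt (by norm_num)).hasFDerivAt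
  -- expansion of the second derivative applied to V
  have hexp : ∀ y ∈ intSimplex A, ∀ γ : A,
      fderiv ℝ F y (V y) (Pi.single γ 1) = (hessMat h y).mulVec (V y) γ := by
    intro y hy γ
    have hv : V y = ∑ b : A, (V y b) • (Pi.single b 1 : A → ℝ) := by
      ext c
      simp [Finset.sum_apply, Pi.single_apply]
    conv_lhs => rw [hv]
    rw [map_sum, ContinuousLinearMap.sum_apply]
    simp only [_root_.map_smul, ContinuousLinearMap.smul_apply, smul_eq_mul]
    rw [Matrix.mulVec, dotProduct]
    apply Finset.sum_congr rfl
    intro b _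
    simp only [hessMat, Matrix.of_apply, ← hF]
    rw [hsym y hy (Pi.single b 1) (Pi.single γ 1)]
    ring
  -- componentwise difference identity from the projection property
  have hproj' : ∀ y ∈ intSimplex A, ∀ α β : A,
      (hessMat h y).mulVec (V y) α - (hessMat h y).mulVec (V y) β
        = M.mulVec y α - M.mulVec y β := by
    intro y hy α β
    have := proj_key (hessMat h y) (hpd y hy) (M.mulVec y) (V y) (hV y hy) α β
    linarith
  -- key derivative computation
  have key_deriv : ∀ (α β : A) (s : ℝ), 0 ≤ s →
      HasDerivWithinAt (fun t => F (x t) (Pi.single α 1) - F (x t) (Pi.single β 1))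
        (M.mulVec (x s) α - M.mulVec (x s) β) (Set.Ici 0) s := by
    intro α β s hs
    have hxs := hxint s hs
    have hcomp : HasDerivWithinAt (fun t => F (x t)) (fderiv ℝ F (x s) (V (x s)))
        (Set.Ici 0) s := (hFd _ hxs).comp_hasDerivWithinAt s (hx' s hs)
    have hα := ((ContinuousLinearMap.apply ℝ ℝ (Pi.single α 1 : A → ℝ)).hasFDerivAt).comp_hasDerivWithinAt s hcomp
    have hβ := ((ContinuousLinearMap.apply ℝ ℝ (Pi.single β 1 : A → ℝ)).hasFDerivAt).comp_hasDerivWithinAt s hcomp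
    have := hα.sub hβ
    simp only [ContinuousLinearMap.apply_apply, Function.comp] at this
    have heq : fderiv ℝ F (x s) (V (x s)) (Pi.single α 1)
        - fderiv ℝ F (x s) (V (x s)) (Pi.single β 1)
        = M.mulVec (x s) α - M.mulVec (x s) β := by
      rw [hexp _ hxs α, hexp _ hxs β, hproj' _ hxs α β]
    rw [heq] at this
    exact this
  -- continuity of the payoff components along the trajectory
  have hMc : ∀ γ : A, ContinuousOn (fun s => M.mulVec (x s) γ) (Set.Ici 0) := by
    intro γ
    have : Continuous (fun w : A → ℝ => M.mulVec w γ) := by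
      simp only [Matrix.mulVec, dotProduct]
      exact continuous_finset_sum _ fun j _ => continuous_const.mul (continuous_apply j)
    exact this.comp_continuousOn hxc
  -- FTC
  have hFTC : ∀ (α β : A) (t : ℝ), 0 < t →
      ∫ s in (0:ℝ)..t, (M.mulVec (x s) α - M.mulVec (x s) β)
        = (F (x t) (Pi.single α 1) - F (x t) (Pi.single β 1))
          - (F (x 0) (Pi.single α 1) - F (x 0) (Pi.single β 1)) := by
    intro α β t ht
    apply intervalIntegral.integral_eq_sub_of_hasDerivAt_of_le ht.le
    · exact fun s hs => ((key_deriv α β s hs.1).continuousWithinAt).mono Set.Icc_subset_Ici_self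
    · intro s hs
      exact (key_deriv α β s hs.1.le).hasDerivAt (Ici_mem_nhds hs.1)
    · apply ContinuousOn.intervalIntegrable
      rw [Set.uIcc_of_le ht.le]
      exact ((hMc α).sub (hMc β)).mono Set.Icc_subset_Ici_self
  -- bound on the gradient along the trajectory
  obtain ⟨C, hC⟩ : ∃ C, ∀ y ∈ K, ‖F y‖ ≤ C := by
    apply hK.exists_bound_of_continuousOn
    exact (hh.continuousOn_fderiv_of_isOpen hU (by norm_num)).mono
      (fun y hy => hXU (hint_sub (hKint hy)))
  have hgbd : ∀ (γ : A) (t : ℝ), 0 ≤ t → |F (x t) (Pi.single γ 1)| ≤ C * ‖(Pi.single γ 1 : A → ℝ)‖ := by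
    intro γ t ht
    calc |F (x t) (Pi.single γ 1)| = ‖F (x t) (Pi.single γ 1)‖ := rfl
      _ ≤ ‖F (x t)‖ * ‖(Pi.single γ 1 : A → ℝ)‖ := (F (x t)).le_opNorm _
      _ ≤ C * ‖(Pi.single γ 1 : A → ℝ)‖ :=
          mul_le_mul_of_nonneg_right (hC _ (hxK t ht)) (norm_nonneg _)
  -- component of the averaged trajectory
  have hcomp_int : ∀ (γ : A) (t : ℝ), 0 ≤ t →
      (∫ s in (0:ℝ)..t, x s) γ = ∫ s in (0:ℝ)..t, x s γ := by
    intro γ t ht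
    exact ((ContinuousLinearMap.proj γ : (A → ℝ) →L[ℝ] ℝ).intervalIntegral_comp_comm
      (hxii t ht)).symm
  have hMint : ∀ (γ : A) (t : ℝ), 0 ≤ t →
      M.mulVec (∫ s in (0:ℝ)..t, x s) γ = ∫ s in (0:ℝ)..t, M.mulVec (x s) γ := by
    intro γ t ht
    have hL := (LinearMap.toContinuousLinearMap
        ((LinearMap.proj γ : (A → ℝ) →ₗ[ℝ] ℝ).comp
          (Matrix.mulVecLin M))).intervalIntegral_comp_comm (hxii t ht)
    simpa [LinearMap.coe_toContinuousLinearMap', LinearMap.coe_comp, Function.comp,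
      LinearMap.proj_apply, Matrix.mulVecLin_apply] using hL.symm
  -- membership of averages in the simplex
  have hmem : ∀ᶠ t in atTop, (t⁻¹ • ∫ s in (0:ℝ)..t, x s) ∈ stdSimplex ℝ A := by
    filter_upwards [eventually_gt_atTop 0] with t ht
    have h1 : ∀ γ : A, (t⁻¹ • ∫ s in (0:ℝ)..t, x s) γ = t⁻¹ * ∫ s in (0:ℝ)..t, x s γ := by
      intro γ
      simp [hcomp_int γ t ht.le]
    constructor
    · intro γ
      rw [h1 γ]
      apply mul_nonneg (inv_nonneg.2 ht.le)
      apply intervalIntegral.integral_nonneg ht.le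
      exact fun s hs => ((hxint s hs.1).1 γ).le
    · rw [Finset.sum_congr rfl fun γ _ => h1 γ, ← Finset.mul_sum,
        ← intervalIntegral.integral_finset_sum]
      · have h2 : ∫ s in (0:ℝ)..t, (∑ γ, x s γ) = ∫ s in (0:ℝ)..t, (1:ℝ) := by
          apply intervalIntegral.integral_congr
          intro s hs
          rw [Set.uIcc_of_le ht.le] at hs
          exact (hxint s hs.1).2
        rw [h2]
        simp [inv_mul_cancel₀ ht.ne']
      · intro γ _
        apply ContinuousOn.intervalIntegrable
        rw [Set.uIcc_of_le ht.le]
        exact (hxcomp γ).mono Set.Icc_subset_Ici_self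
  -- convergence of payoff differences of the averages
  have hd : ∀ α β : A, Tendsto (fun t : ℝ =>
      M.mulVec (t⁻¹ • ∫ s in (0:ℝ)..t, x s) α - M.mulVec (t⁻¹ • ∫ s in (0:ℝ)..t, x s) β)
      atTop (𝓝 0) := by
    intro α β
    set Bd := C * ‖(Pi.single α 1 : A → ℝ)‖ + C * ‖(Pi.single β 1 : A → ℝ)‖ with hBd
    apply squeeze_zero_norm' (a := fun t : ℝ => (2 * Bd) * t⁻¹)
    · filter_upwards [eventually_gt_atTop 0] with t ht
      have iint : ∀ γ : A, IntervalIntegrable (fun s => M.mulVec (x s) γ)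
          MeasureTheory.volume 0 t := by
        intro γ
        apply ContinuousOn.intervalIntegrable
        rw [Set.uIcc_of_le ht.le]
        exact (hMc γ).mono Set.Icc_subset_Ici_self
      have e1 : ∀ γ : A, M.mulVec (t⁻¹ • ∫ s in (0:ℝ)..t, x s) γ
          = t⁻¹ * ∫ s in (0:ℝ)..t, M.mulVec (x s) γ := by
        intro γ
        rw [Matrix.mulVec_smul]
        simp [hMint γ t ht.le]
      rw [e1 α, e1 β, ← mul_sub]
      have e2 : (∫ s in (0:ℝ)..t, M.mulVec (x s) α) - (∫ s in (0:ℝ)..t, M.mulVec (x s) β)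
          = (F (x t) (Pi.single α 1) - F (x t) (Pi.single β 1))
            - (F (x 0) (Pi.single α 1) - F (x 0) (Pi.single β 1)) := by
        rw [← intervalIntegral.integral_sub (iint α) (iint β)]
        exact hFTC α β t ht
      rw [e2]
      have b1 := hgbd α t ht.le
      have b2 := hgbd β t ht.le
      have b3 := hgbd α 0 le_rfl
      have b4 := hgbd β 0 le_rfl
      rw [Real.norm_eq_abs, abs_mul, abs_inv, abs_of_pos ht]
      rw [mul_comm (2 * Bd) t⁻¹]
      apply mul_le_mul_of_nonneg_left _ (inv_nonneg.2 ht.le)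
      rw [hBd]
      calc |F (x t) (Pi.single α 1) - F (x t) (Pi.single β 1) -
            (F (x 0) (Pi.single α 1) - F (x 0) (Pi.single β 1))|
          ≤ |F (x t) (Pi.single α 1)| + |F (x t) (Pi.single β 1)|
            + (|F (x 0) (Pi.single α 1)| + |F (x 0) (Pi.single β 1)|) := by
            apply (abs_sub _ _).trans
            gcongr <;> exact abs_sub _ _
        _ ≤ _ := by nlinarith [norm_nonneg (Pi.single α 1 : A → ℝ), norm_nonneg (Pi.single β 1 : A → ℝ)]
    · simpa using tendsto_inv_atTop_zero.const_mul (2 * Bd)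
  exact limit_key M _ hmem hd
end
end

section
/- Let A be a finite nonempty set, X the simplex in ℝ^A with interior X°, and v : X → ℝ^A continuous. Let h : X → ℝ be continuous, twice continuously differentiable on an open set containing X° with Hessian H(y) positive definite at each y ∈ X°. Let p, q ∈ X with p strictly dominated by q: v(x)·p < v(x)·q for all x ∈ X. Let x : [0,∞) → X° be differentiable with x'(t) = V(x(t)), where V(y) is the H(y)-projection of H(y)⁻¹ v(y) onto ℝ₀^A = {z : ∑_α z_α = 0}. Then (d/dt)(D_h(p, x(t)) − D_h(q, x(t))) = v(x(t))·(q − p) for all t, and D_h(p, x(t)) → ∞ as t → ∞. -/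
open Matrix Filter

noncomputable section

/-! ### Auxiliary lemmas -/

lemma pi_sum_single' (A : Type*) [Fintype A] [DecidableEq A] (u : A → ℝ) :
    u = ∑ α, u α • (Pi.single α (1:ℝ) : A → ℝ) := by
  conv_lhs => rw [← Finset.univ_sum_single u]
  refine Finset.sum_congr rfl fun α _ => ?_
  ext β
  by_cases hb : β = α
  · subst hb; simp
  · simp [Pi.single_apply, hb, Ne.symm]

lemma clm_bilin' {A : Type*} [Fintype A] [DecidableEq A]
    (B : (A → ℝ) →L[ℝ] ((A → ℝ) →L[ℝ] ℝ)) (u w : A → ℝ) :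
    B u w = u ⬝ᵥ (Matrix.of fun α β => B (Pi.single α 1) (Pi.single β 1)).mulVec w := by
  conv_lhs => rw [pi_sum_single' A u, pi_sum_single' A w]
  simp only [map_sum, _root_.map_smul, ContinuousLinearMap.coe_sum', Finset.sum_apply,
    ContinuousLinearMap.coe_smul', Pi.smul_apply, smul_eq_mul, dotProduct,
    Matrix.mulVec, Matrix.of_apply, Finset.mul_sum]
  rw [Finset.sum_comm]
  exact Finset.sum_congr rfl fun α _ => Finset.sum_congr rfl fun β _ => by ring

lemma hess_bilin {A : Type*} [Fintype A] [DecidableEq A]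
    (h : (A → ℝ) → ℝ) (y : A → ℝ) (u w : A → ℝ) :
    fderiv ℝ (fderiv ℝ h) y u w = u ⬝ᵥ (hessMat h y).mulVec w :=
  clm_bilin' (fderiv ℝ (fderiv ℝ h) y) u w

lemma dot_mulVec_symm' {A : Type*} [Fintype A] {G : Matrix A A ℝ}
    (hG : G.IsHermitian) (a b : A → ℝ) : a ⬝ᵥ G.mulVec b = G.mulVec a ⬝ᵥ b := by
  have hsym : ∀ i j, G i j = G j i := fun i j => by
    have := hG.apply j i; simpa using this
  simp only [dotProduct, Matrix.mulVec, Finset.mul_sum, Finset.sum_mul]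
  rw [Finset.sum_comm]
  exact Finset.sum_congr rfl fun i _ => Finset.sum_congr rfl fun j _ => by
    rw [hsym j i]; ring

lemma proj_orth' {A : Type*} [Fintype A] [DecidableEq A] {G : Matrix A A ℝ}
    (hG : G.PosDef) {w V : A → ℝ}
    (hpr : IsGProj G {z : A → ℝ | (∑ α, z α) = 0} w V) :
    ∀ z : A → ℝ, (∑ α, z α) = 0 → G.mulVec (w - V) ⬝ᵥ z = 0 := by
  intro z hz
  by_cases hzz : z = 0
  · simp [hzz]
  set a := w - V with ha
  set c : ℝ := G.mulVec a ⬝ᵥ z with hc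
  set d : ℝ := z ⬝ᵥ G.mulVec z with hd
  have hdpos : 0 < d := hG.re_dotProduct_pos hzz
  have key : ∀ s : ℝ, 0 ≤ s^2 * d - 2 * s * c := by
    intro s
    have hmem : V + s • z ∈ {z : A → ℝ | (∑ α, z α) = 0} := by
      have hVs := hpr.1
      simp only [Set.mem_setOf_eq] at hVs ⊢
      simp [Finset.sum_add_distrib, hVs, Pi.smul_apply, smul_eq_mul, ← Finset.mul_sum, hz]
    have hle := hpr.2 _ hmem
    have hexp : qform G (w - (V + s • z)) = qform G a - 2 * s * c + s^2 * d := by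
      have h1 : w - (V + s • z) = a - s • z := by rw [ha]; abel
      rw [h1]
      simp only [qform, Matrix.mulVec_sub, Matrix.mulVec_smul, dotProduct_sub,
        sub_dotProduct, smul_dotProduct, dotProduct_smul,
        smul_eq_mul]
      have hsy : z ⬝ᵥ G.mulVec a = a ⬝ᵥ G.mulVec z := by
        rw [dot_mulVec_symm' hG.1, dotProduct_comm]
      have hc' : a ⬝ᵥ G.mulVec z = c := by
        rw [hc, dot_mulVec_symm' hG.1]
      rw [hsy, hc']
      ring
    rw [hexp] at hle
    linarith
  by_contra hcne
  have hc2 : 0 < c^2 / d := div_pos (by positivity) hdpos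
  have hcd : (c/d)^2 * d - 2*(c/d)*c = - (c^2/d) := by field_simp; ring
  nlinarith [key (c/d), hc2]

lemma const_of_orth' {A : Type*} [Fintype A] [DecidableEq A] {u : A → ℝ}
    (hu : ∀ z : A → ℝ, (∑ α, z α) = 0 → u ⬝ᵥ z = 0) : ∀ α β, u α = u β := by
  intro α β
  by_cases hab : α = β
  · rw [hab]
  set z : A → ℝ := Pi.single α 1 - Pi.single β 1 with hzdef
  have hz : (∑ γ, z γ) = 0 := by
    simp [hzdef, Finset.sum_sub_distrib, Finset.sum_pi_single]
  have := hu z hz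
  rw [hzdef] at this
  rw [dotProduct_sub, dotProduct_single, dotProduct_single] at this
  linarith

lemma key_alg' {A : Type*} [Fintype A] [DecidableEq A] [Nonempty A]
    {G : Matrix A A ℝ} (hG : G.PosDef) {vy Vy : A → ℝ}
    (hpr : IsGProj G {z : A → ℝ | (∑ α, z α) = 0} (G⁻¹.mulVec vy) Vy)
    {p q : A → ℝ} (hp : (∑ α, p α) = 1) (hq : (∑ α, q α) = 1) :
    Vy ⬝ᵥ G.mulVec (p - q) = vy ⬝ᵥ (p - q) := by
  have hdet : IsUnit G.det := isUnit_iff_ne_zero.mpr hG.det_pos.ne'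
  have hGw : G.mulVec (G⁻¹.mulVec vy) = vy := by
    rw [Matrix.mulVec_mulVec, Matrix.mul_nonsing_inv _ hdet, Matrix.one_mulVec]
  set u : A → ℝ := vy - G.mulVec Vy with hu
  have hueq : G.mulVec (G⁻¹.mulVec vy - Vy) = u := by
    rw [Matrix.mulVec_sub, hGw]
  have hconst : ∀ α β, u α = u β := by
    apply const_of_orth'
    intro z hz
    rw [← hueq]
    exact proj_orth' hG hpr z hz
  have hupq : u ⬝ᵥ (p - q) = 0 := by
    obtain ⟨α₀⟩ := ‹Nonempty A›
    have hcb : ∀ β, u β = u α₀ := fun β => hconst β α₀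
    simp only [dotProduct, Pi.sub_apply]
    calc (∑ β, u β * (p β - q β)) = ∑ β, u α₀ * (p β - q β) := by
          exact Finset.sum_congr rfl fun β _ => by rw [hcb β]
      _ = u α₀ * ((∑ β, p β) - ∑ β, q β) := by
          rw [← Finset.sum_sub_distrib, Finset.mul_sum]
      _ = 0 := by rw [hp, hq]; ring
  have h1 : Vy ⬝ᵥ G.mulVec (p - q) = G.mulVec Vy ⬝ᵥ (p - q) := dot_mulVec_symm' hG.1 _ _
  rw [h1]
  have h2 : G.mulVec Vy = vy - u := by rw [hu]; abel
  rw [h2, sub_dotProduct, hupq, sub_zero]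

lemma myFderivCompDeriv' {A : Type*} [Fintype A]
    {h : (A → ℝ) → ℝ} {U : Set (A → ℝ)} (hU : IsOpen U) (hh : ContDiffOn ℝ 2 h U)
    {x : ℝ → (A → ℝ)} {t : ℝ} {s : Set ℝ} {x' : A → ℝ}
    (hxU : x t ∈ U) (hx : HasDerivWithinAt x x' s t) (r : A → ℝ) :
    HasDerivWithinAt (fun τ => fderiv ℝ h (x τ) r)
      (fderiv ℝ (fderiv ℝ h) (x t) x' r) s t := by
  have hca : ContDiffAt ℝ 2 h (x t) := hh.contDiffAt (hU.mem_nhds hxU)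
  have h1 : ContDiffAt ℝ 1 (fderiv ℝ h) (x t) := hca.fderiv_right (by norm_num)
  have hd : HasFDerivAt (fderiv ℝ h) (fderiv ℝ (fderiv ℝ h) (x t)) (x t) :=
    (h1.differentiableAt one_ne_zero).hasFDerivAt
  have hcomp : HasDerivWithinAt (fun τ => fderiv ℝ h (x τ))
      (fderiv ℝ (fderiv ℝ h) (x t) x') s t :=
    hd.comp_hasDerivWithinAt t hx
  exact (ContinuousLinearMap.apply ℝ ℝ r).hasFDerivAt.comp_hasDerivWithinAt t hcomp

lemma intSimplex_subset_std {A : Type*} [Fintype A] :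
    intSimplex A ⊆ stdSimplex ℝ A := fun y hy => ⟨fun α => (hy.1 α).le, hy.2⟩

/-- Bregman divergence nonnegativity: convexity of `h` along segments. -/
lemma breg_nonneg' {A : Type*} [Fintype A] [DecidableEq A]
    {h : (A → ℝ) → ℝ} {U : Set (A → ℝ)} (hU : IsOpen U) (hXU : intSimplex A ⊆ U)
    (hhcont : ContinuousOn h (stdSimplex ℝ A)) (hh : ContDiffOn ℝ 2 h U)
    (hpd : ∀ y ∈ intSimplex A, (hessMat h y).PosDef)
    {y r : A → ℝ} (hy : y ∈ intSimplex A) (hr : r ∈ stdSimplex ℝ A) :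
    fderiv ℝ h y (r - y) ≤ h r - h y := by
  by_cases hry : r = y
  · subst hry; simp
  set γ : ℝ → (A → ℝ) := fun s => y + s • (r - y) with hγdef
  have hγ0 : γ 0 = y := by simp [hγdef]
  have hγ1 : γ 1 = r := by simp [hγdef]
  have hγmem : ∀ s ∈ Set.Ico (0:ℝ) 1, γ s ∈ intSimplex A := by
    intro s hs
    constructor
    · intro α
      have h1 : γ s α = (1 - s) * y α + s * r α := by
        simp [hγdef, Pi.smul_apply, smul_eq_mul]; ring
      rw [h1]
      have := hy.1 α
      have := hr.1 α
      nlinarith [hs.1, hs.2]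
    · have h1 : (∑ α, γ s α) = (∑ α, y α) + s * ((∑ α, r α) - ∑ α, y α) := by
        simp [hγdef, Pi.smul_apply, smul_eq_mul, Finset.sum_add_distrib, Finset.mul_sum,
          mul_sub, Finset.sum_sub_distrib]
      rw [h1, hy.2, hr.2]; ring
  have hγstd : ∀ s ∈ Set.Icc (0:ℝ) 1, γ s ∈ stdSimplex ℝ A := by
    intro s hs
    rcases lt_or_eq_of_le hs.2 with h1 | h1
    · exact intSimplex_subset_std (hγmem s ⟨hs.1, h1⟩)
    · rw [h1, hγ1]; exact hr
  have hγ' : ∀ s : ℝ, HasDerivAt γ (r - y) s := by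
    intro s
    have : HasDerivAt (fun s : ℝ => s • (r - y)) ((1:ℝ) • (r - y)) s :=
      (hasDerivAt_id s).smul_const (r - y)
    simpa only [one_smul] using this.const_add y
  set g' : ℝ → ℝ := fun s => fderiv ℝ h (γ s) (r - y) with hg'def
  have hg : ∀ s ∈ Set.Ico (0:ℝ) 1, HasDerivAt (fun τ => h (γ τ)) (g' s) s := by
    intro s hs
    have hca : ContDiffAt ℝ 2 h (γ s) := hh.contDiffAt (hU.mem_nhds (hXU (hγmem s hs)))
    have hdiff : DifferentiableAt ℝ h (γ s) := hca.differentiableAt (by norm_num)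
    exact hdiff.hasFDerivAt.comp_hasDerivAt s (hγ' s)
  have hg'd : ∀ s ∈ Set.Ico (0:ℝ) 1,
      HasDerivAt g' ((r - y) ⬝ᵥ (hessMat h (γ s)).mulVec (r - y)) s := by
    intro s hs
    have := myFderivCompDeriv' hU hh (hXU (hγmem s hs))
      ((hγ' s).hasDerivWithinAt (s := Set.univ)) (r - y)
    rw [hasDerivWithinAt_univ] at this
    rwa [hess_bilin] at this
  have hquad : ∀ s ∈ Set.Ico (0:ℝ) 1,
      0 ≤ (r - y) ⬝ᵥ (hessMat h (γ s)).mulVec (r - y) := by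
    intro s hs
    exact ((hpd _ (hγmem s hs)).re_dotProduct_pos (sub_ne_zero.mpr hry)).le
  have hγcont : Continuous γ := by
    exact continuous_const.add (continuous_id.smul continuous_const)
  have hgcont : ContinuousOn (fun τ => h (γ τ)) (Set.Icc 0 1) :=
    hhcont.comp hγcont.continuousOn hγstd
  obtain ⟨c, hc, hceq⟩ := exists_hasDerivAt_eq_slope (fun τ => h (γ τ)) g'
    (by norm_num : (0:ℝ) < 1) hgcont
    (fun s hs => hg s ⟨hs.1.le, hs.2⟩)
  have hslope : g' c = h r - h y := by
    rw [hceq, hγ1, hγ0]; norm_num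
  -- g' 0 ≤ g' c via MVT on g'
  have hg'cont : ContinuousOn g' (Set.Icc 0 c) := by
    intro s hs
    have hs' : s ∈ Set.Ico (0:ℝ) 1 := ⟨hs.1, lt_of_le_of_lt hs.2 hc.2⟩
    exact ((hg'd s hs').continuousAt).continuousWithinAt
  obtain ⟨d, hd, hdeq⟩ := exists_hasDerivAt_eq_slope g'
    (fun s => (r - y) ⬝ᵥ (hessMat h (γ s)).mulVec (r - y)) hc.1 hg'cont
    (fun s hs => hg'd s ⟨hs.1.le, lt_trans hs.2 hc.2⟩)
  have hd' : d ∈ Set.Ico (0:ℝ) 1 := ⟨hd.1.le, lt_trans hd.2 hc.2⟩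
  have hq0 := hquad d hd'
  rw [hdeq] at hq0
  have hcpos : (0:ℝ) < c := hc.1
  have : 0 ≤ g' c - g' 0 := by
    have := mul_nonneg hq0 (le_of_lt hcpos)
    calc (0:ℝ) ≤ (g' c - g' 0) / (c - 0) * c := by
          simpa using mul_nonneg hq0 hcpos.le
      _ = g' c - g' 0 := by rw [sub_zero, div_mul_cancel₀ _ hcpos.ne']
  calc (fderiv ℝ h y) (r - y) = g' 0 := by rw [hg'def]; simp only [hγ0]
    _ ≤ g' c := by linarith
    _ = h r - h y := hslope

/-- extinction of strictly dominated strategies under continuous Hessian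
dynamics.  Along interior solutions `x'(t) = V(x(t))`, the difference of Bregman divergences
`D_h(p, x(t)) − D_h(q, x(t))` has derivative `v(x(t))·(q − p)`, and `D_h(p, x(t)) → ∞`. -/
theorem stmt_13 {A : Type*} [Fintype A] [DecidableEq A] [Nonempty A]
    (v : (A → ℝ) → (A → ℝ)) (hvcont : ContinuousOn v (stdSimplex ℝ A))
    (h : (A → ℝ) → ℝ) (hhcont : ContinuousOn h (stdSimplex ℝ A))
    (U : Set (A → ℝ)) (hU : IsOpen U) (hXU : intSimplex A ⊆ U)
    (hh : ContDiffOn ℝ 2 h U)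
    (hpd : ∀ y ∈ intSimplex A, (hessMat h y).PosDef)
    (p q : A → ℝ) (hp : p ∈ stdSimplex ℝ A) (hq : q ∈ stdSimplex ℝ A)
    (hdom : ∀ y ∈ stdSimplex ℝ A, v y ⬝ᵥ p < v y ⬝ᵥ q)
    (V : (A → ℝ) → (A → ℝ))
    (hV : ∀ y ∈ intSimplex A,
      IsGProj (hessMat h y) {z : A → ℝ | (∑ α, z α) = 0}
        ((hessMat h y)⁻¹.mulVec (v y)) (V y))
    (x : ℝ → (A → ℝ)) (hxint : ∀ t : ℝ, 0 ≤ t → x t ∈ intSimplex A)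
    (hx' : ∀ t : ℝ, 0 ≤ t → HasDerivWithinAt x (V (x t)) (Set.Ici 0) t) :
    (∀ t : ℝ, 0 ≤ t →
      HasDerivWithinAt
        (fun s => (h p - h (x s) - fderiv ℝ h (x s) (p - x s)) -
          (h q - h (x s) - fderiv ℝ h (x s) (q - x s)))
        (v (x t) ⬝ᵥ (q - p)) (Set.Ici 0) t) ∧
    Tendsto (fun t => h p - h (x t) - fderiv ℝ h (x t) (p - x t)) atTop atTop := by
  have heq : (fun s => (h p - h (x s) - fderiv ℝ h (x s) (p - x s)) -
      (h q - h (x s) - fderiv ℝ h (x s) (q - x s))) =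
      fun s => (h p - h q) - fderiv ℝ h (x s) (p - q) := by
    funext s
    have h2 : fderiv ℝ h (x s) (p - x s) - fderiv ℝ h (x s) (q - x s)
        = fderiv ℝ h (x s) (p - q) := by
      rw [← map_sub]; congr 1; abel
    linarith [h2]
  have part1 : ∀ t : ℝ, 0 ≤ t →
      HasDerivWithinAt
        (fun s => (h p - h (x s) - fderiv ℝ h (x s) (p - x s)) -
          (h q - h (x s) - fderiv ℝ h (x s) (q - x s)))
        (v (x t) ⬝ᵥ (q - p)) (Set.Ici 0) t := by
    intro t ht
    have hy : x t ∈ intSimplex A := hxint t ht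
    have hder := myFderivCompDeriv' hU hh (hXU hy) (hx' t ht) (p - q)
    have hD : HasDerivWithinAt (fun s => (h p - h q) - fderiv ℝ h (x s) (p - q))
        (-(fderiv ℝ (fderiv ℝ h) (x t) (V (x t)) (p - q))) (Set.Ici 0) t :=
      hder.const_sub _
    rw [heq]
    have hval : fderiv ℝ (fderiv ℝ h) (x t) (V (x t)) (p - q) = v (x t) ⬝ᵥ (p - q) := by
      rw [hess_bilin]
      exact key_alg' (hpd _ hy) (hV _ hy) hp.2 hq.2
    have hneg : v (x t) ⬝ᵥ (q - p) = -(v (x t) ⬝ᵥ (p - q)) := by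
      rw [dotProduct_sub, dotProduct_sub]; ring
    rw [hneg, ← hval]
    exact hD
  refine ⟨part1, ?_⟩
  -- positive lower bound for v y ⬝ᵥ (q - p) on the simplex
  have hgc : ContinuousOn (fun y => v y ⬝ᵥ (q - p)) (stdSimplex ℝ A) := by
    simp only [dotProduct]
    apply continuousOn_finset_sum
    intro α _
    exact (((continuous_apply α).comp_continuousOn hvcont).mul continuousOn_const)
  obtain ⟨y₀, hy₀, hmin⟩ := (isCompact_stdSimplex ℝ A).exists_isMinOn ⟨p, hp⟩ hgc
  set ε : ℝ := v y₀ ⬝ᵥ (q - p) with hεdef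
  have hε : 0 < ε := by
    have := hdom y₀ hy₀
    rw [hεdef, dotProduct_sub]
    linarith
  have hεle : ∀ y ∈ stdSimplex ℝ A, ε ≤ v y ⬝ᵥ (q - p) := fun y hyy => hmin hyy
  -- the difference function
  set f : ℝ → ℝ := fun s => (h p - h (x s) - fderiv ℝ h (x s) (p - x s)) -
      (h q - h (x s) - fderiv ℝ h (x s) (q - x s)) with hfdef
  have hfc : ContinuousOn f (Set.Ici 0) := fun t ht => (part1 t ht).continuousWithinAt
  have hfat : ∀ t : ℝ, 0 < t → HasDerivAt f (v (x t) ⬝ᵥ (q - p)) t := by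
    intro t ht
    exact (part1 t ht.le).hasDerivAt (Ici_mem_nhds ht)
  have hfd : DifferentiableOn ℝ f (interior (Set.Ici (0:ℝ))) := by
    rw [interior_Ici]
    exact fun t ht => ((hfat t ht).differentiableAt).differentiableWithinAt
  have hfderiv : ∀ t ∈ interior (Set.Ici (0:ℝ)), ε ≤ deriv f t := by
    rw [interior_Ici]
    intro t ht
    rw [(hfat t ht).deriv]
    exact hεle _ (intSimplex_subset_std (hxint t ht.le))
  have hgrow : ∀ t : ℝ, 0 ≤ t → ε * t ≤ f t - f 0 := by
    intro t ht
    have := (convex_Ici (0:ℝ)).mul_sub_le_image_sub_of_le_deriv hfc hfd hfderiv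
      0 (Set.mem_Ici.mpr le_rfl) t ht ht
    simpa using this
  -- lower bound D_h(p,x t) ≥ f 0 + ε t
  have hlow : ∀ t : ℝ, 0 ≤ t →
      f 0 + ε * t ≤ h p - h (x t) - fderiv ℝ h (x t) (p - x t) := by
    intro t ht
    have hB : 0 ≤ h q - h (x t) - fderiv ℝ h (x t) (q - x t) := by
      have := breg_nonneg' hU hXU hhcont hh hpd (hxint t ht) hq
      linarith
    have := hgrow t ht
    have hfexpand : f t = (h p - h (x t) - fderiv ℝ h (x t) (p - x t)) -
        (h q - h (x t) - fderiv ℝ h (x t) (q - x t)) := rfl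
    linarith [hfexpand ▸ this]
  have hcomp : Tendsto (fun t : ℝ => f 0 + ε * t) atTop atTop :=
    tendsto_atTop_add_const_left _ _ (Tendsto.const_mul_atTop hε tendsto_id)
  apply tendsto_atTop_mono' atTop ?_ hcomp
  filter_upwards [eventually_ge_atTop (0:ℝ)] with t ht
  exact hlow t ht
end
end

section
/- Let A be a finite nonempty set, X the simplex in ℝ^A, g a continuously differentiable field of symmetric positive-definite matrices on an open set containing X, and v : X → ℝ^A Lipschitz continuous. For each x ∈ X let V(x) be the g(x)-projection of g(x)⁻¹ v(x) onto the tangent cone TC_X(x). Then there exists a constant K ≥ 0 such that (V(x') − V(x))ᵀ g(x)(x' − x) ≤ K (x' − x)ᵀ g(x)(x' − x) for all x, x' ∈ X (a one-sided Lipschitz condition). -/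
open Matrix

noncomputable section

set_option linter.unusedSectionVars false
section helpers

variable {A : Type*} [Fintype A] [DecidableEq A]

lemma symm_dot {G : Matrix A A ℝ} (hG : Gᵀ = G) (a b : A → ℝ) :
    a ⬝ᵥ G.mulVec b = b ⬝ᵥ G.mulVec a := by
  rw [Matrix.dotProduct_mulVec, ← Matrix.mulVec_transpose, hG, dotProduct_comm]

lemma posdef_transpose {G : Matrix A A ℝ} (hG : G.PosDef) : Gᵀ = G := by
  have := hG.isHermitian
  rwa [Matrix.IsHermitian, Matrix.conjTranspose_eq_transpose_of_trivial] at this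

lemma qform_expand {G : Matrix A A ℝ} (hG : Gᵀ = G) (p u : A → ℝ) (t : ℝ) :
    qform G (p - t • u) = qform G p - 2*t*(p ⬝ᵥ G.mulVec u) + t^2 * qform G u := by
  have h := symm_dot hG u p
  simp only [qform, Matrix.mulVec_sub, Matrix.mulVec_smul, sub_dotProduct,
    dotProduct_sub, smul_dotProduct, dotProduct_smul, smul_eq_mul]
  rw [h]; ring

end helpers

section helpers2
set_option linter.unusedSectionVars false

variable {A : Type*} [Fintype A] [DecidableEq A]

/-- Variational inequality for the `G`-projection onto a convex set. -/
lemma gproj_vi {G : Matrix A A ℝ} (hG : Gᵀ = G) (hq : ∀ u, 0 ≤ qform G u)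
    {C : Set (A → ℝ)} {w V0 : A → ℝ} (h : IsGProj G C w V0)
    (hC : ∀ z ∈ C, ∀ t : ℝ, 0 ≤ t → t ≤ 1 → V0 + t • (z - V0) ∈ C) :
    ∀ z ∈ C, (w - V0) ⬝ᵥ G.mulVec (z - V0) ≤ 0 := by
  intro z hz
  set p := w - V0 with hp
  set u := z - V0 with hu
  set a := p ⬝ᵥ G.mulVec u with ha
  set q := qform G u with hqdef
  by_contra hcon
  push_neg at hcon
  have key : ∀ t : ℝ, 0 ≤ t → t ≤ 1 → 2*t*a ≤ t^2 * q := by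
    intro t ht0 ht1
    have h2 := h.2 (V0 + t • u) (hC z hz t ht0 ht1)
    have : w - (V0 + t • u) = p - t • u := by rw [hp]; abel
    rw [this, qform_expand hG] at h2
    linarith
  have hq0 : 0 ≤ q := hq u
  rcases eq_or_lt_of_le hq0 with hq1 | hq1
  · have := key 1 zero_le_one le_rfl
    rw [← hq1] at this
    nlinarith
  · set t := min 1 (a/q) with htdef
    have ht0 : 0 < t := lt_min one_pos (div_pos hcon hq1)
    have ht1 : t ≤ 1 := min_le_left _ _
    have htq : t * q ≤ a := by
      have : t ≤ a / q := min_le_right _ _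
      calc t * q ≤ (a/q) * q := by nlinarith
        _ = a := div_mul_cancel₀ a hq1.ne'
    have := key t ht0.le ht1
    nlinarith

lemma tcone_segment (x : A → ℝ) {V0 z : A → ℝ} (hV0 : V0 ∈ tcone x) (hz : z ∈ tcone x) :
    ∀ t : ℝ, 0 ≤ t → t ≤ 1 → V0 + t • (z - V0) ∈ tcone x := by
  intro t ht0 ht1
  constructor
  · simp only [Pi.add_apply, Pi.smul_apply, Pi.sub_apply, smul_eq_mul]
    rw [Finset.sum_add_distrib]
    have : ∀ α, t * (z α - V0 α) = t * z α - t * V0 α := fun α => by ring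
    simp only [this, Finset.sum_sub_distrib, ← Finset.mul_sum]
    rw [hV0.1, hz.1]
    ring
  · intro α hα
    have h1 := hV0.2 α hα
    have h2 := hz.2 α hα
    simp only [Pi.add_apply, Pi.smul_apply, Pi.sub_apply, smul_eq_mul]
    nlinarith

lemma tcone_zero (x : A → ℝ) : (0 : A → ℝ) ∈ tcone x := by
  constructor <;> simp

lemma tcone_add (x : A → ℝ) {a b : A → ℝ} (ha : a ∈ tcone x) (hb : b ∈ tcone x) :
    a + b ∈ tcone x := by
  refine ⟨?_, fun α hα => add_nonneg (ha.2 α hα) (hb.2 α hα)⟩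
  simp [Finset.sum_add_distrib, ha.1, hb.1]

lemma tcone_neg_smul (x : A → ℝ) {a : A → ℝ} (ha : a ∈ tcone x) {t : ℝ} (ht : 0 ≤ t) :
    t • a ∈ tcone x := by
  refine ⟨?_, fun α hα => mul_nonneg ht (ha.2 α hα)⟩
  simp [← Finset.mul_sum, ha.1]

lemma sub_mem_tcone {x x' : A → ℝ} (hx : x ∈ stdSimplex ℝ A) (hx' : x' ∈ stdSimplex ℝ A) :
    x' - x ∈ tcone x := by
  constructor
  · simp only [Pi.sub_apply, Finset.sum_sub_distrib]
    rw [hx.2, hx'.2]; ring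
  · intro α hα
    simp only [Pi.sub_apply, hα, sub_zero]
    exact hx'.1 α

/-- dot-product bound via sup norms. -/
lemma dot_le (a b : A → ℝ) : a ⬝ᵥ b ≤ (Fintype.card A : ℝ) * ‖a‖ * ‖b‖ := by
  calc a ⬝ᵥ b ≤ ∑ i, |a i * b i| := Finset.sum_le_sum fun i _ => le_abs_self _
    _ ≤ ∑ _i : A, ‖a‖ * ‖b‖ := Finset.sum_le_sum fun i _ => by
        rw [abs_mul]
        exact mul_le_mul (norm_le_pi_norm a i) (norm_le_pi_norm b i) (abs_nonneg _)
          (norm_nonneg _)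
    _ = (Fintype.card A : ℝ) * ‖a‖ * ‖b‖ := by
        rw [Finset.sum_const, Finset.card_univ, nsmul_eq_mul]; ring

lemma mulVec_norm_le (h : A → A → ℝ) (u : A → ℝ) :
    ‖(Matrix.of h).mulVec u‖ ≤ (Fintype.card A : ℝ) * ‖h‖ * ‖u‖ := by
  have hnn : (0:ℝ) ≤ (Fintype.card A : ℝ) * ‖h‖ * ‖u‖ := by positivity
  rw [pi_norm_le_iff_of_nonneg hnn]
  intro i
  have : (Matrix.of h).mulVec u i = ∑ j, h i j * u j := rfl
  rw [this]
  calc ‖∑ j, h i j * u j‖ ≤ ∑ j, ‖h i j * u j‖ := norm_sum_le _ _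
    _ ≤ ∑ _j : A, ‖h‖ * ‖u‖ := Finset.sum_le_sum fun j _ => by
        rw [norm_mul]
        refine mul_le_mul (le_trans (norm_le_pi_norm (h i) j) (norm_le_pi_norm h i))
          (norm_le_pi_norm u j) (norm_nonneg _) (norm_nonneg _)
    _ = (Fintype.card A : ℝ) * ‖h‖ * ‖u‖ := by
        rw [Finset.sum_const, Finset.card_univ, nsmul_eq_mul]; ring

end helpers2

section helpers3
set_option linter.unusedSectionVars false
variable {A : Type*} [Fintype A] [DecidableEq A] [Nonempty A]

lemma qform_nonneg {G : Matrix A A ℝ} (hpd : G.PosDef) (u : A → ℝ) : 0 ≤ qform G u := by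
  rcases eq_or_ne u 0 with h | h
  · simp [qform, h]
  · have := hpd.dotProduct_mulVec_pos h
    simp only [star_trivial] at this
    exact (le_of_lt this)

lemma inv_dot {G : Matrix A A ℝ} (hpd : G.PosDef) (v u : A → ℝ) :
    (G⁻¹.mulVec v) ⬝ᵥ G.mulVec u = v ⬝ᵥ u := by
  rw [symm_dot (posdef_transpose hpd), Matrix.mulVec_mulVec,
    Matrix.mul_nonsing_inv _ (isUnit_iff_ne_zero.mpr hpd.det_pos.ne'),
    Matrix.one_mulVec, dotProduct_comm]

lemma stdSimplex_nonempty' : (stdSimplex ℝ A).Nonempty := by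
  refine ⟨fun _ => (Fintype.card A : ℝ)⁻¹, fun _ => by positivity, ?_⟩
  rw [Finset.sum_const, Finset.card_univ, nsmul_eq_mul]
  rw [mul_inv_cancel₀]
  exact_mod_cast Fintype.card_ne_zero

lemma exists_coercive {U : Set (A → ℝ)} (hXU : stdSimplex ℝ A ⊆ U)
    {g : (A → ℝ) → A → A → ℝ} (hgc : ContinuousOn g U)
    (hgpd : ∀ y ∈ U, (Matrix.of (g y)).PosDef) :
    ∃ c : ℝ, 0 < c ∧ ∀ x ∈ stdSimplex ℝ A, ∀ d : A → ℝ,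
      c * ‖d‖^2 ≤ d ⬝ᵥ (Matrix.of (g x)).mulVec d := by
  set K : Set ((A → ℝ) × (A → ℝ)) := stdSimplex ℝ A ×ˢ Metric.sphere 0 1 with hK
  have hKc : IsCompact K := (isCompact_stdSimplex ℝ A).prod (isCompact_sphere 0 1)
  have hKne : K.Nonempty := stdSimplex_nonempty'.prod
    (NormedSpace.sphere_nonempty.mpr zero_le_one)
  set φ : ((A → ℝ) × (A → ℝ)) → ℝ := fun p => ∑ i, p.2 i * ∑ j, g p.1 i j * p.2 j with hφdef
  have hφeq : ∀ p : ((A → ℝ) × (A → ℝ)), φ p = p.2 ⬝ᵥ (Matrix.of (g p.1)).mulVec p.2 := by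
    intro p; rfl
  have hgK : ContinuousOn (fun p : ((A → ℝ) × (A → ℝ)) => g p.1) K :=
    hgc.comp continuousOn_fst (fun p hp => hXU hp.1)
  have hφc : ContinuousOn φ K := by
    apply continuousOn_finset_sum
    intro i _
    apply ContinuousOn.mul
    · exact ((continuous_apply i).comp continuous_snd).continuousOn
    · apply continuousOn_finset_sum
      intro j _
      apply ContinuousOn.mul
      · exact ((continuous_apply j).comp (continuous_apply i)).comp_continuousOn hgK
      · exact ((continuous_apply j).comp continuous_snd).continuousOn
  obtain ⟨p₀, hp₀K, hmin⟩ := hKc.exists_isMinOn hKne hφc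
  set c := φ p₀ with hc
  have hu₀ : p₀.2 ≠ 0 := by
    have : ‖p₀.2‖ = 1 := mem_sphere_zero_iff_norm.mp hp₀K.2
    intro h; rw [h] at this; simp at this
  have hcpos : 0 < c := by
    rw [hc, hφeq]
    have := (hgpd p₀.1 (hXU hp₀K.1)).dotProduct_mulVec_pos hu₀
    simpa using this
  refine ⟨c, hcpos, fun x hx d => ?_⟩
  rcases eq_or_ne d 0 with h | h
  · simp [h, Matrix.mulVec_zero]
  · have hd : 0 < ‖d‖ := norm_pos_iff.mpr h
    set u := ‖d‖⁻¹ • d with hu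
    have huS : u ∈ Metric.sphere (0 : A → ℝ) 1 := by
      rw [mem_sphere_zero_iff_norm, hu, norm_smul, norm_inv, norm_norm,
        inv_mul_cancel₀ hd.ne']
    have hmem : (x, u) ∈ K := ⟨hx, huS⟩
    have hge : c ≤ φ (x, u) := hmin hmem
    rw [hφeq] at hge
    simp only [hu] at hge
    rw [Matrix.mulVec_smul, smul_dotProduct, dotProduct_smul,
      smul_eq_mul, smul_eq_mul] at hge
    have h2 : c * ‖d‖^2 ≤ ‖d‖⁻¹ * (‖d‖⁻¹ * (d ⬝ᵥ (Matrix.of (g x)).mulVec d)) * ‖d‖^2 := by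
      nlinarith [sq_nonneg ‖d‖]
    calc c * ‖d‖^2 ≤ ‖d‖⁻¹ * (‖d‖⁻¹ * (d ⬝ᵥ (Matrix.of (g x)).mulVec d)) * ‖d‖^2 := h2
      _ = d ⬝ᵥ (Matrix.of (g x)).mulVec d := by rw [pow_two]; field_simp

end helpers3


set_option maxHeartbeats 1000000 in
/-- Lemma 1SL: the vector field of discontinuous Riemannian game dynamics
satisfies a one-sided Lipschitz condition: there is `K ≥ 0` such that
`(V(x') − V(x))ᵀ g(x)(x' − x) ≤ K (x' − x)ᵀ g(x)(x' − x)` for all `x, x'` in the simplex.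
Here `g` is a `C¹` field of symmetric positive-definite matrices on an open set containing
the simplex, `v` is Lipschitz, and `V(y)` is the `g(y)`-projection of `g(y)⁻¹ v(y)` onto
`TC_X(y)`. -/
theorem stmt_17 {A : Type*} [Fintype A] [DecidableEq A] [Nonempty A]
    (U : Set (A → ℝ)) (hU : IsOpen U) (hXU : stdSimplex ℝ A ⊆ U)
    (g : (A → ℝ) → A → A → ℝ) (hg : ContDiffOn ℝ 1 g U)
    (hgpd : ∀ y ∈ U, (Matrix.of (g y)).PosDef)
    (v : (A → ℝ) → (A → ℝ)) (Kv : NNReal) (hv : LipschitzOnWith Kv v (stdSimplex ℝ A))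
    (V : (A → ℝ) → (A → ℝ))
    (hV : ∀ y ∈ stdSimplex ℝ A,
      IsGProj (Matrix.of (g y)) (tcone y) ((Matrix.of (g y))⁻¹.mulVec (v y)) (V y)) :
    ∃ K : ℝ, 0 ≤ K ∧ ∀ x ∈ stdSimplex ℝ A, ∀ x' ∈ stdSimplex ℝ A,
      (V x' - V x) ⬝ᵥ (Matrix.of (g x)).mulVec (x' - x) ≤
        K * ((x' - x) ⬝ᵥ (Matrix.of (g x)).mulVec (x' - x)) := by
  set S := stdSimplex ℝ A with hS
  set n : ℝ := (Fintype.card A : ℝ) with hn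
  have hn0 : 0 ≤ n := Nat.cast_nonneg _
  -- coercivity constant
  obtain ⟨c, hc, hcoer⟩ := exists_coercive hXU hg.continuousOn hgpd
  -- bound on v
  obtain ⟨Mv0, hMv0⟩ := (isCompact_stdSimplex ℝ A).exists_bound_of_continuousOn hv.continuousOn
  set Mv : ℝ := max Mv0 0 with hMv
  have hMvnn : 0 ≤ Mv := le_max_right _ _
  have hMvb : ∀ y ∈ S, ‖v y‖ ≤ Mv := fun y hy => (hMv0 y hy).trans (le_max_left _ _)
  -- Lipschitz constant of g on S
  have hfd : ContinuousOn (fderiv ℝ g) U := hg.continuousOn_fderiv_of_isOpen hU le_rfl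
  obtain ⟨Lg0, hLg0⟩ := (isCompact_stdSimplex ℝ A).exists_bound_of_continuousOn (hfd.mono hXU)
  set Lg : ℝ := max Lg0 0 with hLg
  have hLgnn : 0 ≤ Lg := le_max_right _ _
  have hglip : ∀ x ∈ S, ∀ y ∈ S, ‖g y - g x‖ ≤ Lg * ‖y - x‖ := by
    intro x hx y hy
    refine (convex_stdSimplex ℝ A).norm_image_sub_le_of_norm_hasFDerivWithin_le
      (fun z hz => ?_) (fun z hz => (hLg0 z hz).trans (le_max_left _ _)) hx hy
    exact ((hg.contDiffAt (hU.mem_nhds (hXU hz))).differentiableAt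
      one_ne_zero).hasFDerivAt.hasFDerivWithinAt
  -- bound on V
  set MV : ℝ := n * Mv / c with hMV
  have hMVnn : 0 ≤ MV := by positivity
  have hVb : ∀ y ∈ S, ‖V y‖ ≤ MV := by
    intro y hy
    have hpd := hgpd y (hXU hy)
    have hsym := posdef_transpose hpd
    have hvi := gproj_vi hsym (qform_nonneg hpd) (hV y hy)
      (fun z hz t ht0 ht1 => tcone_segment y (hV y hy).1 hz t ht0 ht1)
    have h0 := hvi 0 (tcone_zero y)
    rw [zero_sub, Matrix.mulVec_neg, dotProduct_neg, neg_nonpos,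
      sub_dotProduct, inv_dot hpd] at h0
    have h1 : V y ⬝ᵥ (Matrix.of (g y)).mulVec (V y) ≤ v y ⬝ᵥ V y := by linarith
    have h2 := hcoer y hy (V y)
    have h3 : v y ⬝ᵥ V y ≤ n * Mv * ‖V y‖ := by
      calc v y ⬝ᵥ V y ≤ n * ‖v y‖ * ‖V y‖ := dot_le _ _
        _ ≤ n * Mv * ‖V y‖ := by
            have := hMvb y hy
            gcongr
    rw [hMV, le_div_iff₀ hc]
    have h4 : c * ‖V y‖^2 ≤ n * Mv * ‖V y‖ := by linarith
    rcases eq_or_lt_of_le (norm_nonneg (V y)) with hz | hz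
    · rw [← hz, zero_mul]; positivity
    · have h5 : (‖V y‖ * c) * ‖V y‖ ≤ (n * Mv) * ‖V y‖ := by nlinarith
      exact le_of_mul_le_mul_right h5 hz
  -- the constant
  set B : ℝ := n * (Kv : ℝ) + n^2 * Lg * MV with hB
  have hBnn : 0 ≤ B := by positivity
  refine ⟨B / c, by positivity, ?_⟩
  intro x hx x' hx'
  set G := Matrix.of (g x) with hGdef
  set G' := Matrix.of (g x') with hG'def
  set d : A → ℝ := x' - x with hd
  have hpdx := hgpd x (hXU hx)
  have hpdx' := hgpd x' (hXU hx')
  have hsymx := posdef_transpose hpdx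
  have hsymx' := posdef_transpose hpdx'
  -- variational inequality at x, with z = V x + d
  have hvix := gproj_vi hsymx (qform_nonneg hpdx) (hV x hx)
    (fun z hz t ht0 ht1 => tcone_segment x (hV x hx).1 hz t ht0 ht1)
  have hA := hvix (V x + d) (tcone_add x (hV x hx).1 (sub_mem_tcone hx hx'))
  rw [add_sub_cancel_left, sub_dotProduct, inv_dot hpdx] at hA
  -- v x ⬝ᵥ d - V x ⬝ᵥ G.mulVec d ≤ 0
  -- variational inequality at x', with z = V x' + (x - x')
  have hvix' := gproj_vi hsymx' (qform_nonneg hpdx') (hV x' hx')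
    (fun z hz t ht0 ht1 => tcone_segment x' (hV x' hx').1 hz t ht0 ht1)
  have hBineq := hvix' (V x' + (x - x')) (tcone_add x' (hV x' hx').1 (sub_mem_tcone hx' hx))
  rw [add_sub_cancel_left] at hBineq
  have hxd : x - x' = -d := by rw [hd, neg_sub]
  rw [hxd, Matrix.mulVec_neg, dotProduct_neg, neg_nonpos,
    sub_dotProduct, inv_dot hpdx'] at hBineq
  -- 0 ≤ v x' ⬝ᵥ d - V x' ⬝ᵥ G'.mulVec d
  -- split the target
  have hGdsym : (G - G')ᵀ = G - G' := by rw [Matrix.transpose_sub, hsymx, hsymx']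
  have hsplit : (V x' - V x) ⬝ᵥ G.mulVec d =
      (V x' ⬝ᵥ G'.mulVec d - V x ⬝ᵥ G.mulVec d) + ((G - G').mulVec (V x')) ⬝ᵥ d := by
    have e1 : ((G - G').mulVec (V x')) ⬝ᵥ d = V x' ⬝ᵥ (G - G').mulVec d := by
      rw [dotProduct_comm, symm_dot hGdsym]
    rw [e1, Matrix.sub_mulVec, dotProduct_sub, sub_dotProduct]
    ring
  -- bound term 1
  have hvd : ‖v x' - v x‖ ≤ (Kv : ℝ) * ‖d‖ := by
    have := hv.dist_le_mul x' hx' x hx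
    rw [dist_eq_norm, dist_eq_norm] at this
    exact this
  have ht1 : V x' ⬝ᵥ G'.mulVec d - V x ⬝ᵥ G.mulVec d ≤ n * (Kv : ℝ) * ‖d‖^2 := by
    have h5 : (v x' - v x) ⬝ᵥ d ≤ n * ‖v x' - v x‖ * ‖d‖ := dot_le _ _
    rw [sub_dotProduct] at h5
    have h6 : n * ‖v x' - v x‖ * ‖d‖ ≤ n * ((Kv : ℝ) * ‖d‖) * ‖d‖ := by gcongr
    have h7 : n * ((Kv : ℝ) * ‖d‖) * ‖d‖ = n * (Kv : ℝ) * ‖d‖^2 := by ring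
    linarith
  -- bound term 2
  have ht2 : ((G - G').mulVec (V x')) ⬝ᵥ d ≤ n^2 * Lg * MV * ‖d‖^2 := by
    have e2 : (G - G') = Matrix.of (g x - g x') := rfl
    have h7 : ((Matrix.of (g x - g x')).mulVec (V x')) ⬝ᵥ d ≤
        n * ‖(Matrix.of (g x - g x')).mulVec (V x')‖ * ‖d‖ := dot_le _ _
    have h8 : ‖(Matrix.of (g x - g x')).mulVec (V x')‖ ≤ n * ‖g x - g x'‖ * ‖V x'‖ :=
      mulVec_norm_le _ _
    have h9 : ‖g x - g x'‖ ≤ Lg * ‖d‖ := by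
      have := hglip x' hx' x hx
      rwa [show x - x' = -d from hxd, norm_neg] at this
    have h10 : ‖V x'‖ ≤ MV := hVb x' hx'
    rw [e2]
    calc (Matrix.of (g x - g x')).mulVec (V x') ⬝ᵥ d
        ≤ n * ‖(Matrix.of (g x - g x')).mulVec (V x')‖ * ‖d‖ := dot_le _ _
      _ ≤ n * (n * ‖g x - g x'‖ * ‖V x'‖) * ‖d‖ := by gcongr
      _ ≤ n * (n * (Lg * ‖d‖) * MV) * ‖d‖ := by gcongr
      _ = n^2 * Lg * MV * ‖d‖^2 := by ring
  -- coercivity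
  have hco := hcoer x hx d
  have hfinal : (V x' - V x) ⬝ᵥ G.mulVec d ≤ B * ‖d‖^2 := by
    rw [hsplit, hB]; nlinarith
  calc (V x' - V x) ⬝ᵥ G.mulVec d ≤ B * ‖d‖^2 := hfinal
    _ = (B / c) * (c * ‖d‖^2) := by field_simp
    _ ≤ (B / c) * (d ⬝ᵥ G.mulVec d) := by
        apply mul_le_mul_of_nonneg_left hco (by positivity)
end
end

section
/- Let A be a finite nonempty set, X the simplex in ℝ^A, and V : X → ℝ^A Lipschitz continuous with ∑_α V_α(x) = 0 for all x ∈ X and V_α(x) = 0 whenever x_α = 0. Then for every x₀ ∈ X there exists a unique differentiable x : ℝ → X with x(0) = x₀ and x'(t) = V(x(t)) for all t ∈ ℝ; moreover, supp(x(t)) = supp(x₀) for all t ∈ ℝ (each solution has constant support). -/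
open Matrix Filter

open Set Metric Asymptotics Real
open scoped InnerProductSpace

noncomputable section

section Aux

variable {F : Type*} [NormedAddCommGroup F] [InnerProductSpace ℝ F] [CompleteSpace F]

/-- Nearest-point projection onto a nonempty closed convex set: existence with
variational characterization, minimality, 1-Lipschitzness, identity on the set. -/
theorem stmt19_exists_proj_convex {K : Set F} (hne : K.Nonempty) (hc : IsClosed K)
    (hconv : Convex ℝ K) :
    ∃ P : F → F, (∀ y, P y ∈ K) ∧
      (∀ y, ∀ z ∈ K, ⟪y - P y, z - P y⟫_ℝ ≤ 0) ∧
      (∀ y, ∀ z ∈ K, ‖y - P y‖ ≤ ‖y - z‖) ∧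
      LipschitzWith 1 P ∧ (∀ y ∈ K, P y = y) := by
  have hcomp : IsComplete K := hc.isComplete
  have hex : ∀ u : F, ∃ v ∈ K, ‖u - v‖ = ⨅ w : K, ‖u - w‖ :=
    exists_norm_eq_iInf_of_complete_convex hne hcomp hconv
  choose P hPmem hPeq using hex
  have hne' : Nonempty K := hne.to_subtype
  have hmin : ∀ y : F, ∀ z ∈ K, ‖y - P y‖ ≤ ‖y - z‖ := by
    intro y z hz
    rw [hPeq y]
    exact ciInf_le ⟨0, Set.forall_mem_range.2 fun _ => norm_nonneg _⟩ (⟨z, hz⟩ : K)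
  have hvar : ∀ y : F, ∀ z ∈ K, ⟪y - P y, z - P y⟫_ℝ ≤ 0 := by
    intro y
    exact (norm_eq_iInf_iff_real_inner_le_zero hconv (hPmem y)).1 (hPeq y)
  have hid : ∀ y ∈ K, P y = y := by
    intro y hy
    have h1 := hvar y y hy
    have h2 : (0:ℝ) ≤ ⟪y - P y, y - P y⟫_ℝ := real_inner_self_nonneg
    have : ⟪y - P y, y - P y⟫_ℝ = 0 := le_antisymm h1 h2
    have h3 : y - P y = 0 := inner_self_eq_zero.1 (by exact_mod_cast this)
    exact (sub_eq_zero.1 h3).symm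
  have hlip : LipschitzWith 1 P := by
    apply LipschitzWith.of_dist_le_mul
    intro a b
    rw [NNReal.coe_one, one_mul, dist_eq_norm, dist_eq_norm]
    have h1 : ⟪a - P a, P b - P a⟫_ℝ ≤ 0 := hvar a (P b) (hPmem b)
    have h2 : ⟪b - P b, P a - P b⟫_ℝ ≤ 0 := hvar b (P a) (hPmem a)
    have key : ‖P a - P b‖ ^ 2 ≤ ⟪a - b, P a - P b⟫_ℝ := by
      have e1 : P b - P a = -(P a - P b) := by abel
      rw [e1, inner_neg_right] at h1
      have hsum : ⟪(b - P b) - (a - P a), P a - P b⟫_ℝ ≤ 0 := by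
        rw [inner_sub_left]; linarith
      have e2 : (b - P b) - (a - P a) = (b - a) + (P a - P b) := by abel
      rw [e2, inner_add_left, real_inner_self_eq_norm_sq] at hsum
      have e3 : ⟪b - a, P a - P b⟫_ℝ = -⟪a - b, P a - P b⟫_ℝ := by
        rw [← inner_neg_left]; congr 1; abel
      rw [e3] at hsum; linarith
    have cs : ⟪a - b, P a - P b⟫_ℝ ≤ ‖a - b‖ * ‖P a - P b‖ := real_inner_le_norm _ _
    rcases eq_or_lt_of_le (norm_nonneg (P a - P b)) with h0 | h0
    · rw [← h0]; exact norm_nonneg _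
    · have hsq : ‖P a - P b‖ ^ 2 = ‖P a - P b‖ * ‖P a - P b‖ := sq _
      have h4 : ‖P a - P b‖ * ‖P a - P b‖ ≤ ‖a - b‖ * ‖P a - P b‖ := by linarith
      exact le_of_mul_le_mul_right h4 h0
  exact ⟨P, hPmem, hvar, hmin, hlip, hid⟩

variable {E : Type*} [NormedAddCommGroup E] [NormedSpace ℝ E] [CompleteSpace E]

/-- Global existence for a bounded, globally Lipschitz autonomous vector field. -/
theorem stmt19_exists_global_solution {W : E → E} {L : NNReal} {C : ℝ}
    (hW : LipschitzWith L W) (hC : ∀ y, ‖W y‖ ≤ C) (y₀ : E) :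
    ∃ y : ℝ → E, y 0 = y₀ ∧ ∀ t : ℝ, HasDerivAt y (W (y t)) t := by
  have hC0 : 0 ≤ C := le_trans (norm_nonneg _) (hC y₀)
  have hloc : ∀ n : ℕ, ∃ f : ℝ → E, f 0 = y₀ ∧
      ∀ t ∈ Ioo (-(n+1) : ℝ) (n+1), HasDerivAt f (W (f t)) t := by
    intro n
    have hpl : IsPicardLindelof (fun _ : ℝ => W) (tmin := (-(n+1) : ℝ)) (tmax := (n+1 : ℝ))
        ⟨0, by constructor <;> [linarith [Nat.cast_nonneg (α := ℝ) n]; positivity]⟩ y₀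
        (C.toNNReal * (n+1)) 0 C.toNNReal L := by
      constructor
      · exact fun t _ => hW.lipschitzOnWith
      · exact fun x _ => continuousOn_const
      · exact fun t _ x _ => (hC x).trans (Real.le_coe_toNNReal C)
      · have : max ((n+1:ℝ) - 0) (0 - -(n+1)) = (n+1 : ℝ) := by
          rw [sub_zero, zero_sub, neg_neg, max_self]
        simp only [this, NNReal.coe_mul, NNReal.coe_zero, sub_zero, NNReal.coe_add,
          NNReal.coe_natCast, NNReal.coe_one, zero_sub, neg_neg, max_self, le_refl]
    obtain ⟨f, hf0, hf⟩ := hpl.exists_eq_forall_mem_Icc_hasDerivWithinAt₀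
    refine ⟨f, hf0, fun t ht => ?_⟩
    exact (hf t (Ioo_subset_Icc_self ht)).hasDerivAt (Icc_mem_nhds ht.1 ht.2)
  choose F hF0 hF using hloc
  have hagree : ∀ m n : ℕ, m ≤ n → ∀ t ∈ Ioo (-(m+1) : ℝ) (m+1), F m t = F n t := by
    intro m n hmn
    have hsub : Ioo (-(m+1) : ℝ) (m+1) ⊆ Ioo (-(n+1) : ℝ) (n+1) := by
      apply Ioo_subset_Ioo <;> [simp; skip] <;> exact_mod_cast by
        have := (Nat.cast_le (α := ℝ)).2 hmn; linarith
    have h0mem : (0:ℝ) ∈ Ioo (-(m+1) : ℝ) (m+1) := by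
      constructor <;> [linarith [Nat.cast_nonneg (α := ℝ) m]; positivity]
    exact ODE_solution_unique_of_mem_Ioo
      (fun _ _ => hW.lipschitzOnWith (s := (univ : Set E))) h0mem
      (fun t ht => ⟨hF m t ht, mem_univ _⟩)
      (fun t ht => ⟨hF n t (hsub ht), mem_univ _⟩)
      ((hF0 m).trans (hF0 n).symm)
  have hmem : ∀ t : ℝ, t ∈ Ioo (-(⌊|t|⌋₊+1) : ℝ) (⌊|t|⌋₊+1) := by
    intro t
    have : |t| < (⌊|t|⌋₊ : ℝ) + 1 := Nat.lt_floor_add_one _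
    exact abs_lt.1 this
  set y : ℝ → E := fun t => F ⌊|t|⌋₊ t with hy
  have hglue : ∀ (n : ℕ) (t : ℝ), t ∈ Ioo (-(n+1) : ℝ) (n+1) → y t = F n t := by
    intro n t ht
    rcases le_total ⌊|t|⌋₊ n with h | h
    · exact hagree _ _ h t (hmem t)
    · exact (hagree _ _ h t ht).symm
  refine ⟨y, ?_, ?_⟩
  · simpa [hy] using (hF0 ⌊|(0:ℝ)|⌋₊)
  · intro t
    set n := ⌊|t|⌋₊
    have hopen : Ioo (-(n+1) : ℝ) (n+1) ∈ nhds t := Ioo_mem_nhds (hmem t).1 (hmem t).2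
    have heq : y =ᶠ[nhds t] F n := eventually_of_mem hopen (fun s hs => hglue n s hs)
    have h1 : HasDerivAt (F n) (W (F n t)) t := hF n t (hmem t)
    have h2 : HasDerivAt y (W (F n t)) t := h1.congr_of_eventuallyEq heq
    rwa [← hglue n t (hmem t)] at h2

end Aux

set_option maxHeartbeats 2000000 in
/-- Proposition wp(i): well-posedness and support invariance of continuous
Riemannian game dynamics.  If `V` is Lipschitz on the simplex, its components sum to zero,
and `V_α(x) = 0` whenever `x_α = 0`, then from every initial condition in the simplex there
is a unique differentiable solution `x : ℝ → X` of `ẋ = V(x)`, and every such solution has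
constant support. -/
theorem stmt_19 {A : Type*} [Fintype A] [Nonempty A]
    (V : (A → ℝ) → (A → ℝ)) (K : NNReal) (hV : LipschitzOnWith K V (stdSimplex ℝ A))
    (hsum : ∀ x ∈ stdSimplex ℝ A, (∑ α, V x α) = 0)
    (hbd : ∀ x ∈ stdSimplex ℝ A, ∀ α : A, x α = 0 → V x α = 0) :
    ∀ x₀ ∈ stdSimplex ℝ A,
      (∃! x : ℝ → (A → ℝ), (∀ t : ℝ, x t ∈ stdSimplex ℝ A) ∧ x 0 = x₀ ∧
        ∀ t : ℝ, HasDerivAt x (V (x t)) t) ∧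
      (∀ x : ℝ → (A → ℝ), (∀ t : ℝ, x t ∈ stdSimplex ℝ A) → x 0 = x₀ →
        (∀ t : ℝ, HasDerivAt x (V (x t)) t) →
        ∀ t : ℝ, ∀ α : A, (x t α = 0 ↔ x₀ α = 0)) := by
  classical
  intro x₀ hx₀
  -- ## Support invariance
  have supp : ∀ x : ℝ → (A → ℝ), (∀ t, x t ∈ stdSimplex ℝ A) →
      (∀ t, HasDerivAt x (V (x t)) t) → ∀ α : A, x 0 α = 0 → ∀ t, x t α = 0 := by
    intro x hxS hxd α hx0
    by_cases hsingle : ∀ β : A, β = α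
    · -- one-point case: impossible since then `x 0 α = 1`
      exfalso
      have huniv : (Finset.univ : Finset A) = {α} := by
        ext β; simp [hsingle β]
      have := (hxS 0).2
      rw [huniv, Finset.sum_singleton, hx0] at this
      norm_num at this
    push_neg at hsingle
    obtain ⟨β, hβα⟩ := hsingle
    -- coordinate bound
    have hbound : ∀ w ∈ stdSimplex ℝ A, |V w α| ≤ (K:ℝ) * w α := by
      intro w hw
      set w' : A → ℝ := w + w α • ((Pi.single β 1 : A → ℝ) - Pi.single α 1) with hw'def
      have hw'c : ∀ γ, w' γ = w γ + w α *
          ((if β = γ then (1:ℝ) else 0) - (if α = γ then (1:ℝ) else 0)) := by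
        intro γ
        simp [hw'def, Pi.single_apply, eq_comm]
      have hw'α : w' α = 0 := by
        rw [hw'c α]
        simp [hβα]
      have hw'S : w' ∈ stdSimplex ℝ A := by
        constructor
        · intro γ
          rw [hw'c γ]
          by_cases h1 : α = γ
          · subst h1
            rw [if_neg hβα, if_pos rfl]
            have := hw.1 α
            nlinarith
          · by_cases h2 : β = γ
            · subst h2
              rw [if_neg h1, if_pos rfl]
              have h3 := hw.1 β
              have h4 := hw.1 α
              nlinarith
            · rw [if_neg h1, if_neg h2]
              have := hw.1 γ
              nlinarith
        · have h1 : ∑ γ, w' γ = ∑ γ, (w γ + w α *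
              ((if β = γ then (1:ℝ) else 0) - (if α = γ then (1:ℝ) else 0))) :=
            Finset.sum_congr rfl (fun γ _ => hw'c γ)
          rw [h1, Finset.sum_add_distrib, ← Finset.mul_sum, Finset.sum_sub_distrib,
            Finset.sum_ite_eq, Finset.sum_ite_eq]
          simp [hw.2]
      have hdist : dist w w' ≤ w α := by
        refine (dist_pi_le_iff (hw.1 α)).2 fun γ => ?_
        rw [Real.dist_eq, hw'c γ]
        have hwa := hw.1 α
        by_cases h1 : α = γ
        · subst h1
          rw [if_neg hβα, if_pos rfl]
          rw [show w α - (w α + w α * ((0:ℝ) - 1)) = w α by ring, abs_of_nonneg hwa]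
        · by_cases h2 : β = γ
          · subst h2
            rw [if_neg h1, if_pos rfl]
            rw [show w β - (w β + w α * ((1:ℝ) - 0)) = -(w α) by ring, abs_neg,
              abs_of_nonneg hwa]
          · rw [if_neg h1, if_neg h2]
            rw [show w γ - (w γ + w α * ((0:ℝ) - 0)) = 0 by ring, abs_zero]
            exact hwa
      have hV0 : V w' α = 0 := hbd w' hw'S α hw'α
      calc |V w α| = dist (V w α) (V w' α) := by rw [hV0, Real.dist_eq, sub_zero]
        _ ≤ dist (V w) (V w') := dist_le_pi_dist (V w) (V w') α
        _ ≤ (K:ℝ) * dist w w' := hV.dist_le_mul w hw w' hw'S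
        _ ≤ (K:ℝ) * w α := mul_le_mul_of_nonneg_left hdist K.coe_nonneg
    -- the coordinate function
    have hf' : ∀ s : ℝ, HasDerivAt (fun σ => x σ α) (V (x s) α) s := by
      intro s
      exact ((ContinuousLinearMap.proj (R := ℝ) (φ := fun _ : A => ℝ)
        α).hasFDerivAt).comp_hasDerivAt s (hxd s)
    have hcont : Continuous fun σ => x σ α :=
      continuous_iff_continuousAt.2 fun s => (hf' s).continuousAt
    have fwd : ∀ t : ℝ, 0 ≤ t → x t α = 0 := by
      intro t ht
      have := norm_le_gronwallBound_of_norm_deriv_right_le (f := fun σ => x σ α)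
        (f' := fun σ => V (x σ) α) (δ := 0) (K := (K:ℝ)) (ε := 0) (a := 0) (b := t)
        hcont.continuousOn (fun s _ => (hf' s).hasDerivWithinAt)
        (by simp [hx0]) ?_ t ⟨ht, le_rfl⟩
      · rw [gronwallBound_ε0_δ0] at this
        simpa using norm_le_zero_iff.1 this
      · intro s _
        rw [Real.norm_eq_abs, Real.norm_eq_abs, abs_of_nonneg ((hxS s).1 α), add_zero]
        exact hbound (x s) (hxS s)
    have bwd : ∀ t : ℝ, t ≤ 0 → x t α = 0 := by
      intro t ht
      have hg' : ∀ s : ℝ, HasDerivAt (fun σ => x (-σ) α) (V (x (-s)) α * (-1)) s := by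
        intro s
        exact (hf' (-s)).comp s (hasDerivAt_neg s)
      have := norm_le_gronwallBound_of_norm_deriv_right_le (f := fun σ => x (-σ) α)
        (f' := fun σ => V (x (-σ)) α * (-1)) (δ := 0) (K := (K:ℝ)) (ε := 0) (a := 0) (b := -t)
        (hcont.comp continuous_neg).continuousOn (fun s _ => (hg' s).hasDerivWithinAt)
        (by simp [hx0]) ?_ (-t) ⟨by linarith, le_rfl⟩
      · rw [gronwallBound_ε0_δ0] at this
        have := norm_le_zero_iff.1 this
        simpa using this
      · intro s _
        rw [Real.norm_eq_abs, Real.norm_eq_abs, abs_of_nonneg ((hxS (-s)).1 α), add_zero,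
          abs_mul]
        simpa using hbound (x (-s)) (hxS (-s))
    intro t
    rcases le_total 0 t with h | h
    · exact fwd t h
    · exact bwd t h
  -- ## Uniqueness
  have uniq : ∀ x₁ x₂ : ℝ → (A → ℝ), (∀ t, x₁ t ∈ stdSimplex ℝ A) →
      (∀ t, x₂ t ∈ stdSimplex ℝ A) → (∀ t, HasDerivAt x₁ (V (x₁ t)) t) →
      (∀ t, HasDerivAt x₂ (V (x₂ t)) t) → x₁ 0 = x₂ 0 → x₁ = x₂ := by
    intro x₁ x₂ hS₁ hS₂ hd₁ hd₂ h0
    funext t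
    have hmem : t ∈ Ioo (-(⌊|t|⌋₊+1) : ℝ) (⌊|t|⌋₊+1) := by
      have : |t| < (⌊|t|⌋₊ : ℝ) + 1 := Nat.lt_floor_add_one _
      exact abs_lt.1 this
    have h0mem : (0:ℝ) ∈ Ioo (-(⌊|t|⌋₊+1) : ℝ) (⌊|t|⌋₊+1) := by
      constructor <;> [linarith [Nat.cast_nonneg (α := ℝ) ⌊|t|⌋₊]; positivity]
    exact ODE_solution_unique_of_mem_Ioo
      (fun _ _ => hV) h0mem
      (fun s _ => ⟨hd₁ s, hS₁ s⟩) (fun s _ => ⟨hd₂ s, hS₂ s⟩) h0 hmem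
  -- ## Existence
  obtain ⟨x, hxS, hx0, hxd⟩ : ∃ x : ℝ → (A → ℝ), (∀ t, x t ∈ stdSimplex ℝ A) ∧ x 0 = x₀ ∧
      ∀ t, HasDerivAt x (V (x t)) t := by
    set e : EuclideanSpace ℝ A ≃L[ℝ] (A → ℝ) :=
      PiLp.continuousLinearEquiv 2 ℝ (fun _ : A => ℝ) with he
    set SE : Set (EuclideanSpace ℝ A) := ⇑e ⁻¹' (stdSimplex ℝ A) with hSEdef
    have hSEconv : Convex ℝ SE :=
      (convex_stdSimplex ℝ A).is_linear_preimage ⟨map_add e, map_smul e⟩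
    have hSEclosed : IsClosed SE := (isClosed_stdSimplex ℝ A).preimage e.continuous
    have hSEcomp : IsCompact SE := by
      have himg : SE = ⇑e.symm '' (stdSimplex ℝ A) := by
        ext z
        constructor
        · intro hz
          exact ⟨e z, hz, e.symm_apply_apply z⟩
        · rintro ⟨w, hw, rfl⟩
          simpa [hSEdef] using hw
      rw [himg]
      exact (isCompact_stdSimplex ℝ A).image e.symm.continuous
    have hSEne : SE.Nonempty := ⟨e.symm x₀, by simpa [hSEdef] using hx₀⟩
    obtain ⟨P, hPmem, hPvar, hPmin, hPlip, hPid⟩ :=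
      stmt19_exists_proj_convex hSEne hSEclosed hSEconv
    -- the modified vector field
    set V' : EuclideanSpace ℝ A → EuclideanSpace ℝ A := fun z => e.symm (V (e z)) with hV'def
    have hV'lip : LipschitzOnWith (‖(e.symm : (A → ℝ) →L[ℝ] EuclideanSpace ℝ A)‖₊ *
        (K * ‖(e : EuclideanSpace ℝ A →L[ℝ] (A → ℝ))‖₊)) V' SE := by
      exact (e.symm : (A → ℝ) →L[ℝ] EuclideanSpace ℝ A).lipschitz.comp_lipschitzOnWith
        (hV.comp ((e : EuclideanSpace ℝ A →L[ℝ] (A → ℝ)).lipschitz.lipschitzOnWith)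
          (fun z hz => hz))
    set W : EuclideanSpace ℝ A → EuclideanSpace ℝ A := fun z => V' (P z) with hWdef
    have hWlip : LipschitzWith ((‖(e.symm : (A → ℝ) →L[ℝ] EuclideanSpace ℝ A)‖₊ *
        (K * ‖(e : EuclideanSpace ℝ A →L[ℝ] (A → ℝ))‖₊)) * 1) W := by
      rw [← lipschitzOnWith_univ]
      exact hV'lip.comp hPlip.lipschitzOnWith (fun z _ => hPmem z)
    obtain ⟨C, hCb⟩ : ∃ C, ∀ z ∈ SE, ‖V' z‖ ≤ C :=
      hSEcomp.exists_bound_of_continuousOn hV'lip.continuousOn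
    have hWb : ∀ z, ‖W z‖ ≤ C := fun z => hCb _ (hPmem z)
    obtain ⟨y, hy0, hyd⟩ := stmt19_exists_global_solution hWlip hWb (e.symm x₀)
    -- the key tangency identity
    have hkey : ∀ z ∈ SE, ∀ u : EuclideanSpace ℝ A,
        (∀ w ∈ SE, ⟪u, w - z⟫_ℝ ≤ 0) → ⟪u, V' z⟫_ℝ = 0 := by
      intro z hz u hu
      have haS : e z ∈ stdSimplex ℝ A := hz
      set a : A → ℝ := e z with hadef
      set b : A → ℝ := V a with hbdef
      have hab : ∀ α, b α ≠ 0 → 0 < a α := by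
        intro α h
        rcases lt_or_eq_of_le (haS.1 α) with h' | h'
        · exact h'
        · exact absurd (hbd a haS α h'.symm) h
      set ε : ℝ := min 1 (Finset.univ.inf' Finset.univ_nonempty
        (fun α => if b α = 0 then 1 else a α / |b α|)) with hεdef
      have hε0 : 0 < ε := by
        refine lt_min one_pos ?_
        rw [Finset.lt_inf'_iff]
        intro α _
        by_cases h : b α = 0
        · simp [h]
        · simp only [h, if_false]
          exact div_pos (hab α h) (abs_pos.2 h)
      have hεle : ∀ α, ε * |b α| ≤ a α ∨ b α = 0 := by
        intro α
        by_cases h : b α = 0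
        · exact Or.inr h
        · left
          have h1 : ε ≤ a α / |b α| := by
            refine le_trans (min_le_right _ _) ?_
            refine Finset.inf'_le _ (Finset.mem_univ α) |>.trans ?_
            simp [h]
        
          exact (le_div_iff₀ (abs_pos.2 h)).1 h1 |>.trans_eq rfl
      have hmemc : ∀ c : ℝ, |c| ≤ ε → z + c • (V' z) ∈ SE := by
        intro c hc
        have hev : e (V' z) = b := by
          simp [hV'def, hbdef, hadef]
        show e (z + c • V' z) ∈ stdSimplex ℝ A
        rw [map_add, _root_.map_smul, hev]
        constructor
        · intro α
          show 0 ≤ a α + c * b α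
          rcases hεle α with h | h
          · have : |c * b α| ≤ a α := by
              rw [abs_mul]
              exact le_trans (mul_le_mul_of_nonneg_right hc (abs_nonneg _)) h
            linarith [neg_abs_le (c * b α)]
          · simp [h, haS.1 α]
        · show ∑ α, (a α + c * b α) = 1
          rw [Finset.sum_add_distrib, ← Finset.mul_sum]
          have hsb : ∑ α, b α = 0 := hsum a haS
          rw [haS.2, hsb]
          ring
      have hplus := hu (z + ε • V' z) (hmemc ε (by rw [abs_of_pos hε0]))
      have hminus := hu (z + (-ε) • V' z) (hmemc (-ε) (by rw [abs_neg, abs_of_pos hε0]))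
      rw [add_sub_cancel_left, real_inner_smul_right] at hplus hminus
      nlinarith
    -- continuity facts
    have hycont : Continuous y := continuous_iff_continuousAt.2 fun s => (hyd s).continuousAt
    have hpcont : Continuous fun s => P (y s) := hPlip.continuous.comp hycont
    -- the squared distance function is constant
    have hgd : ∀ t, HasDerivAt (fun s => ⟪y s - P (y s), y s - P (y s)⟫_ℝ) 0 t := by
      intro t
      have huv : ⟪y t - P (y t), V' (P (y t))⟫_ℝ = 0 :=
        hkey (P (y t)) (hPmem (y t)) (y t - P (y t)) (fun w hw => hPvar (y t) w hw)
      -- the comparison function  q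
      have hqd : HasDerivAt (fun s => ⟪y s - P (y t), y s - P (y t)⟫_ℝ) 0 t := by
        have hc : HasDerivAt (fun s => y s - P (y t)) (W (y t)) t := (hyd t).sub_const _
        have h := hc.inner (𝕜 := ℝ) hc
        have h0 : ⟪y t - P (y t), W (y t)⟫_ℝ + ⟪W (y t), y t - P (y t)⟫_ℝ = 0 := by
          have h1 : ⟪W (y t), y t - P (y t)⟫_ℝ = ⟪y t - P (y t), W (y t)⟫_ℝ :=
            real_inner_comm _ _
          rw [h1]
          have : W (y t) = V' (P (y t)) := rfl
          rw [this, huv]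
          ring
        rwa [h0] at h
      have hqlo : (fun s => ⟪y s - P (y t), y s - P (y t)⟫_ℝ
          - ⟪y t - P (y t), y t - P (y t)⟫_ℝ) =o[nhds t] fun s => s - t := by
        have := hasDerivAt_iff_isLittleO.1 hqd
        simpa using this
      -- little-o pieces for the lower bound
      have hbigO : (fun s => y s - y t) =O[nhds t] fun s => s - t := (hyd t).isBigO_sub
      have hy0' : Tendsto (fun s => y s - y t) (nhds t) (nhds 0) := by
        simpa using (hycont.tendsto t).sub (tendsto_const_nhds (x := y t))
      have hp0' : Tendsto (fun s => P (y t) - P (y s)) (nhds t) (nhds 0) := by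
        simpa using (tendsto_const_nhds (x := P (y t))).sub (hpcont.tendsto t)
      have piece1 : (fun s => ⟪y s - y t, y s - y t⟫_ℝ) =o[nhds t] fun s => s - t := by
        have hmul : (fun s => ‖y s - y t‖ * ‖y s - y t‖) =o[nhds t]
            fun s => (s - t) * 1 :=
          hbigO.norm_left.mul_isLittleO ((isLittleO_one_iff ℝ).2 hy0').norm_left
        have hle : ∀ s, ‖⟪y s - y t, y s - y t⟫_ℝ‖ ≤ ‖‖y s - y t‖ * ‖y s - y t‖‖ := by
          intro s
          rw [Real.norm_eq_abs, Real.norm_eq_abs,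
            abs_of_nonneg (mul_nonneg (norm_nonneg _) (norm_nonneg _))]
          exact abs_real_inner_le_norm _ _
        have := (Asymptotics.IsBigO.of_bound' (Filter.Eventually.of_forall hle)).trans_isLittleO
          hmul
        simpa [mul_one] using this
      have piece2 : (fun s => ⟪y s - y t, y t - P (y t)⟫_ℝ) =o[nhds t] fun s => s - t := by
        have hc : HasDerivAt (fun s => y s - y t) (W (y t)) t := (hyd t).sub_const _
        have h := hc.inner (𝕜 := ℝ) (hasDerivAt_const t (y t - P (y t)))
        have h0 : ⟪y t - y t, (0:EuclideanSpace ℝ A)⟫_ℝ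
            + ⟪W (y t), y t - P (y t)⟫_ℝ = 0 := by
          rw [inner_zero_right, real_inner_comm]
          have : W (y t) = V' (P (y t)) := rfl
          rw [this, huv]
          ring
        rw [h0] at h
        have := hasDerivAt_iff_isLittleO.1 h
        simpa using this
      have piece3 : (fun s => ⟪y s - y t, P (y t) - P (y s)⟫_ℝ) =o[nhds t] fun s => s - t := by
        have hmul : (fun s => ‖y s - y t‖ * ‖P (y t) - P (y s)‖) =o[nhds t]
            fun s => (s - t) * 1 :=
          hbigO.norm_left.mul_isLittleO ((isLittleO_one_iff ℝ).2 hp0').norm_left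
        have hle : ∀ s, ‖⟪y s - y t, P (y t) - P (y s)⟫_ℝ‖
            ≤ ‖‖y s - y t‖ * ‖P (y t) - P (y s)‖‖ := by
          intro s
          rw [Real.norm_eq_abs, Real.norm_eq_abs,
            abs_of_nonneg (mul_nonneg (norm_nonneg _) (norm_nonneg _))]
          exact abs_real_inner_le_norm _ _
        have := (Asymptotics.IsBigO.of_bound' (Filter.Eventually.of_forall hle)).trans_isLittleO
          hmul
        simpa [mul_one] using this
      -- the lower bound function r
      have hr : (fun s => ⟪y s - y t, y s - y t⟫_ℝ
          + 2 * ⟪y s - y t, y t - P (y s)⟫_ℝ) =o[nhds t] fun s => s - t := by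
        have hdecomp : ∀ s, ⟪y s - y t, y s - y t⟫_ℝ + 2 * ⟪y s - y t, y t - P (y s)⟫_ℝ
            = ⟪y s - y t, y s - y t⟫_ℝ + 2 * ⟪y s - y t, y t - P (y t)⟫_ℝ
              + 2 * ⟪y s - y t, P (y t) - P (y s)⟫_ℝ := by
          intro s
          have hsplit : y t - P (y s) = (y t - P (y t)) + (P (y t) - P (y s)) := by abel
          rw [hsplit, inner_add_right]
          ring
        have h := (piece1.add (piece2.const_mul_left 2)).add (piece3.const_mul_left 2)
        refine h.congr' (Filter.Eventually.of_forall fun s => ?_) (Filter.EventuallyEq.rfl)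
        exact (hdecomp s).symm
      -- the sandwich
      have hub : ∀ s, ⟪y s - P (y s), y s - P (y s)⟫_ℝ - ⟪y t - P (y t), y t - P (y t)⟫_ℝ
          ≤ ⟪y s - P (y t), y s - P (y t)⟫_ℝ - ⟪y t - P (y t), y t - P (y t)⟫_ℝ := by
        intro s
        have h1 : ‖y s - P (y s)‖ ≤ ‖y s - P (y t)‖ := hPmin (y s) (P (y t)) (hPmem (y t))
        have h2 : ‖y s - P (y s)‖ ^ 2 ≤ ‖y s - P (y t)‖ ^ 2 :=
          pow_le_pow_left₀ (norm_nonneg _) h1 2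
        rw [real_inner_self_eq_norm_sq, real_inner_self_eq_norm_sq (y s - P (y t))]
        linarith
      have hlb : ∀ s, ⟪y s - y t, y s - y t⟫_ℝ + 2 * ⟪y s - y t, y t - P (y s)⟫_ℝ
          ≤ ⟪y s - P (y s), y s - P (y s)⟫_ℝ - ⟪y t - P (y t), y t - P (y t)⟫_ℝ := by
        intro s
        have hiden : ⟪y s - P (y s), y s - P (y s)⟫_ℝ
            = ⟪y s - y t, y s - y t⟫_ℝ + 2 * ⟪y s - y t, y t - P (y s)⟫_ℝ
              + ⟪y t - P (y s), y t - P (y s)⟫_ℝ := by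
          have hsplit : y s - P (y s) = (y s - y t) + (y t - P (y s)) := by abel
          rw [hsplit, real_inner_add_add_self]
        have h1 : ‖y t - P (y t)‖ ≤ ‖y t - P (y s)‖ := hPmin (y t) (P (y s)) (hPmem (y s))
        have h2 : ‖y t - P (y t)‖ ^ 2 ≤ ‖y t - P (y s)‖ ^ 2 :=
          pow_le_pow_left₀ (norm_nonneg _) h1 2
        rw [real_inner_self_eq_norm_sq (y t - P (y t))] at *
        rw [hiden, real_inner_self_eq_norm_sq (y t - P (y s))]
        linarith
      -- conclude
      rw [hasDerivAt_iff_isLittleO]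
      simp only [smul_zero, sub_zero]
      rw [Asymptotics.isLittleO_iff]
      intro c hc
      filter_upwards [Asymptotics.isLittleO_iff.1 hqlo hc,
        Asymptotics.isLittleO_iff.1 hr hc] with s h1 h2
      rw [Real.norm_eq_abs] at h1 ⊢
      rw [Real.norm_eq_abs] at h2
      rw [abs_le]
      constructor
      · have := neg_abs_le (⟪y s - y t, y s - y t⟫_ℝ + 2 * ⟪y s - y t, y t - P (y s)⟫_ℝ)
        have h3 := hlb s
        linarith
      · have := le_abs_self (⟪y s - P (y t), y s - P (y t)⟫_ℝ
          - ⟪y t - P (y t), y t - P (y t)⟫_ℝ)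
        have h3 := hub s
        linarith
    have hgconst := is_const_of_deriv_eq_zero (𝕜 := ℝ)
      (f := fun s => ⟪y s - P (y s), y s - P (y s)⟫_ℝ)
      (fun t => (hgd t).differentiableAt) (fun t => (hgd t).deriv)
    have hy0SE : y 0 ∈ SE := by
      rw [hy0]
      show e (e.symm x₀) ∈ stdSimplex ℝ A
      simpa using hx₀
    have hg0 : ⟪y 0 - P (y 0), y 0 - P (y 0)⟫_ℝ = 0 := by
      rw [hPid (y 0) hy0SE]
      simp
    have hyP : ∀ t, P (y t) = y t := by
      intro t
      have : ⟪y t - P (y t), y t - P (y t)⟫_ℝ = 0 := (hgconst t 0).trans hg0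
      have h3 : y t - P (y t) = 0 := inner_self_eq_zero.1 (by exact_mod_cast this)
      exact (sub_eq_zero.1 h3).symm
    have hySE : ∀ t, y t ∈ SE := fun t => (hyP t) ▸ hPmem (y t)
    -- transfer back
    refine ⟨fun s => e (y s), fun s => hySE s, ?_, fun s => ?_⟩
    · show e (y 0) = x₀
      rw [hy0]
      exact e.apply_symm_apply x₀
    · have hd := hyd s
      have hWval : W (y s) = e.symm (V (e (y s))) := by
        show V' (P (y s)) = e.symm (V (e (y s)))
        rw [hyP s]
      rw [hWval] at hd
      have h := ((e : EuclideanSpace ℝ A →L[ℝ] (A → ℝ)).hasFDerivAt).comp_hasDerivAt s hd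
      exact h
  refine ⟨⟨x, ⟨hxS, hx0, hxd⟩, ?_⟩, ?_⟩
  · rintro x' ⟨h1, h2, h3⟩
    exact uniq x' x h1 hxS h3 hxd (h2.trans hx0.symm)
  · intro z hzS hz0 hzd t α
    constructor
    · intro h
      have hwd : ∀ s : ℝ, HasDerivAt (fun σ => z (t + σ)) (V (z (t + s))) s := by
        intro s
        exact (hzd (t + s)).comp_const_add t s
      have hw0 : (fun σ => z (t + σ)) 0 α = 0 := by
        simpa using h
      have := supp (fun σ => z (t + σ)) (fun σ => hzS (t + σ)) hwd α hw0 (-t)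
      simp only [add_neg_cancel] at this
      rw [hz0] at this
      exact this
    · intro h
      have hz0α : z 0 α = 0 := by rw [hz0]; exact h
      exact supp z hzS hzd α hz0α t
end
end
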